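/- arXiv:1403.3831 — 7 statements merged into one kernel-verified Lean document; each statement's English description precedes it below -/
import Mathlib

section
/- Let (M, ρ) be a metric space and T a minimal spanning tree on (M, ρ). Then every edge e of T is exact: if removing e from T partitions M into components M₁ and M₂, then ρ(e) = inf{ρ(x,y) : x ∈ M₁, y ∈ M₂}. -/
open scoped ENNReal

namespace MSTPaper

variable {M : Type*}

/-- The length of an edge `e` of a graph on a metric space: the extended
distance between its endpoints. -/
noncomputable def edgeLen [MetricSpace M] (e : Sym2 M) : ℝ≥0∞ :=
  Sym2.lift ⟨fun x y => edist x y, fun x y => edist_comm x y⟩ e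

/-- The length of a graph: the (possibly infinite) sum of the lengths of its edges. -/
noncomputable def graphLen [MetricSpace M] (G : SimpleGraph M) : ℝ≥0∞ :=
  ∑' e : G.edgeSet, edgeLen (e : Sym2 M)

/-- The distance between two subsets of a metric space. -/
noncomputable def setDist [MetricSpace M] (A B : Set M) : ℝ≥0∞ :=
  ⨅ x ∈ A, ⨅ y ∈ B, edist x y

/-- A minimal spanning tree on the metric space `M`: a spanning tree of finite
length whose length equals the infimum of lengths of all spanning trees on `M`. -/
def IsMST [MetricSpace M] (T : SimpleGraph M) : Prop :=
  T.IsTree ∧ graphLen T < ⊤ ∧ ∀ T' : SimpleGraph M, T'.IsTree → graphLen T ≤ graphLen T'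

/-- An edge `uv` of `G` is exact if its length equals the distance between the
two connected components obtained by removing it. -/
def ExactEdge [MetricSpace M] (G : SimpleGraph M) (u v : M) : Prop :=
  edist u v = setDist {x | (G.deleteEdges {s(u,v)}).Reachable u x}
                      {x | (G.deleteEdges {s(u,v)}).Reachable v x}

lemma graphLen_insert [MetricSpace M] {G H : SimpleGraph M} {e : Sym2 M}
    (hG : G.edgeSet = insert e H.edgeSet) (he : e ∉ H.edgeSet) :
    graphLen G = edgeLen e + graphLen H := by
  unfold graphLen
  rw [hG, Set.insert_eq,
    ENNReal.summable.tsum_union_disjoint (f := fun e : Sym2 M => edgeLen e)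
      (Set.disjoint_singleton_left.mpr he) ENNReal.summable,
    tsum_singleton]

/-- Every edge of a minimal spanning tree is exact. -/
theorem mst_edges_exact [MetricSpace M] (T : SimpleGraph M) (hT : IsMST T) :
    ∀ a b : M, T.Adj a b → ExactEdge T a b := by
  classical
  intro a b hab
  obtain ⟨⟨hconn, hacyc⟩, hfin, hmin⟩ := hT
  set G' := T.deleteEdges {s(a, b)} with hG'def
  have hbridge : ¬ G'.Reachable a b := by
    have h := (SimpleGraph.isAcyclic_iff_forall_adj_isBridge.mp hacyc) hab
    rw [SimpleGraph.isBridge_iff] at h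
    exact h
  -- every vertex is reachable from a or from b in G'
  have key : ∀ u v : M, T.Walk u v →
      (G'.Reachable a u ∨ G'.Reachable b u) → (G'.Reachable a v ∨ G'.Reachable b v) := by
    intro u v w
    induction w with
    | nil => exact id
    | @cons u' c' v' h p ih =>
      intro hu
      apply ih
      by_cases he : s(u', c') = s(a, b)
      · rw [Sym2.eq_iff] at he
        rcases he with ⟨rfl, rfl⟩ | ⟨rfl, rfl⟩
        · exact Or.inr (SimpleGraph.Reachable.refl _)
        · exact Or.inl (SimpleGraph.Reachable.refl _)
      · have hadj : G'.Adj u' c' := by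
          rw [hG'def, SimpleGraph.deleteEdges_adj]
          exact ⟨h, by simpa using he⟩
        rcases hu with hu | hu
        · exact Or.inl (hu.trans hadj.reachable)
        · exact Or.inr (hu.trans hadj.reachable)
  have dich : ∀ z : M, G'.Reachable a z ∨ G'.Reachable b z := by
    intro z
    obtain ⟨w⟩ := hconn.preconnected a z
    exact key a z w (Or.inl (SimpleGraph.Reachable.refl _))
  unfold ExactEdge
  have haA : a ∈ {x | G'.Reachable a x} := SimpleGraph.Reachable.refl _
  have hbB : b ∈ {x | G'.Reachable b x} := SimpleGraph.Reachable.refl _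
  have hle : setDist {x | G'.Reachable a x} {x | G'.Reachable b x} ≤ edist a b :=
    iInf₂_le_of_le a haA (iInf₂_le b hbB)
  refine le_antisymm ?_ hle
  by_contra hcon
  rw [not_le] at hcon
  -- extract close points x ∈ A, y ∈ B
  unfold setDist at hcon
  simp only [iInf_lt_iff] at hcon
  obtain ⟨x, hax, y, hby, hxy⟩ := hcon
  have hax : G'.Reachable a x := hax
  have hby : G'.Reachable b y := hby
  have hnr : ¬ G'.Reachable x y := fun h => hbridge ((hax.trans h).trans hby.symm)
  have hxyne : x ≠ y := by rintro rfl; exact hnr (SimpleGraph.Reachable.refl _)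
  have hxyE : s(x, y) ∉ G'.edgeSet := fun h =>
    hnr (SimpleGraph.Adj.reachable ((SimpleGraph.mem_edgeSet G').mp h))
  -- the swapped tree
  set T' := SimpleGraph.fromEdgeSet (insert s(x, y) G'.edgeSet) with hT'def
  have hT'e : T'.edgeSet = insert s(x, y) G'.edgeSet := by
    rw [hT'def, SimpleGraph.edgeSet_fromEdgeSet]
    ext e
    simp only [Set.mem_diff, Set.mem_insert_iff, Set.mem_setOf_eq, and_iff_left_iff_imp]
    rintro (rfl | h)
    · simp [Sym2.mk_isDiag_iff, hxyne]
    · exact fun hd => (SimpleGraph.not_isDiag_of_mem_edgeSet _ h) hd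
  have hG'T' : G' ≤ T' := by
    intro u v huv
    rw [hT'def, SimpleGraph.fromEdgeSet_adj]
    exact ⟨Or.inr ((SimpleGraph.mem_edgeSet G').mpr huv), huv.ne⟩
  have hT'xy : T'.Adj x y := by
    rw [hT'def, SimpleGraph.fromEdgeSet_adj]
    exact ⟨Or.inl rfl, hxyne⟩
  -- connectivity of T'
  have hub : ∀ z : M, T'.Reachable x z := by
    intro z
    rcases dich z with h | h
    · exact ((hax.mono hG'T').symm.trans (h.mono hG'T'))
    · exact (hT'xy.reachable.trans ((hby.mono hG'T').symm.trans (h.mono hG'T')))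
  have hT'conn : T'.Connected := by
    rw [SimpleGraph.connected_iff]
    exact ⟨fun u v => (hub u).symm.trans (hub v), ⟨a⟩⟩
  -- acyclicity of T'
  have hT'ac : T'.IsAcyclic := by
    intro v c hc
    by_cases he : s(x, y) ∈ c.edges
    · have h2 : T'.Adj x y ∧ (T' \ SimpleGraph.fromEdgeSet {s(x, y)}).Reachable x y :=
        SimpleGraph.adj_and_reachable_delete_edges_iff_exists_cycle.mpr ⟨v, c, hc, he⟩
      have hle2 : (T' \ SimpleGraph.fromEdgeSet {s(x, y)}) ≤ G' := by
        intro u w huw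
        have h3 : s(u, w) ∈ (T' \ SimpleGraph.fromEdgeSet {s(x, y)}).edgeSet :=
          (SimpleGraph.mem_edgeSet _).mpr huw
        rw [SimpleGraph.edgeSet_sdiff, hT'e, SimpleGraph.edgeSet_fromEdgeSet] at h3
        obtain ⟨h4, h5⟩ := h3
        rcases h4 with h4 | h4
        · exact absurd h4 (by simpa [huw.ne] using h5)
        · exact (SimpleGraph.mem_edgeSet G').mp h4
      exact hnr (h2.2.mono hle2)
    · have hsub : ∀ e ∈ c.edges, e ∈ T.edgeSet := by
        intro e hec
        have h4 := c.edges_subset_edgeSet hec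
        rw [hT'e] at h4
        rcases h4 with rfl | h4
        · exact absurd hec he
        · exact SimpleGraph.edgeSet_mono (SimpleGraph.deleteEdges_le _) h4
      exact hacyc (c.transfer T hsub) (hc.transfer hsub)
  -- length comparison
  have habE : s(a, b) ∉ G'.edgeSet := by
    rw [hG'def, SimpleGraph.edgeSet_deleteEdges]
    simp
  have hTe : T.edgeSet = insert s(a, b) G'.edgeSet := by
    rw [hG'def, SimpleGraph.edgeSet_deleteEdges, Set.insert_diff_singleton,
      Set.insert_eq_of_mem ((SimpleGraph.mem_edgeSet T).mpr hab)]
  have hLT : graphLen T = edist a b + graphLen G' := graphLen_insert hTe habE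
  have hLT' : graphLen T' = edist x y + graphLen G' := graphLen_insert hT'e hxyE
  have hG'fin : graphLen G' ≠ ⊤ := by
    intro h
    rw [hLT, h, add_top] at hfin
    exact (lt_irrefl _ hfin)
  have hstrict : graphLen T' < graphLen T := by
    rw [hLT, hLT']
    exact ENNReal.add_lt_add_right hG'fin hxy
  exact absurd (hmin T' ⟨hT'conn, hT'ac⟩) (not_le.mpr hstrict)

end MSTPaper
end

section
/- Let M = {1/n : n ∈ ℕ, n ≥ 1} ∪ {0} ⊆ ℝ with the standard metric ρ(x,y) = |x−y|. Then there is no minimal spanning tree on (M, ρ). -/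
open scoped ENNReal

namespace MSTPaper

variable {M : Type*}

section Aux

open SimpleGraph

lemma edgeLen_mk [MetricSpace M] (a b : M) : edgeLen s(a, b) = edist a b := rfl

/-- After deleting the edge `s(u,v)`, any vertex reachable in `H` from `a` is
reachable from `a`, `u`, or `v`. -/
lemma reachable_delete_cases {V : Type*} {H : SimpleGraph V} {u v a c : V}
    (p : H.Walk a c) :
    (H.deleteEdges {s(u,v)}).Reachable a c ∨ (H.deleteEdges {s(u,v)}).Reachable u c ∨
      (H.deleteEdges {s(u,v)}).Reachable v c := by
  induction p with
  | nil => exact Or.inl (Reachable.refl _)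
  | @cons a b c hab p ih =>
    by_cases he : s(a, b) = s(u, v)
    · rcases Sym2.eq_iff.mp he with ⟨ha, hb⟩ | ⟨ha, hb⟩
      · subst ha; subst hb
        rcases ih with h | h | h
        · exact Or.inr (Or.inr h)
        · exact Or.inr (Or.inl h)
        · exact Or.inr (Or.inr h)
      · subst ha; subst hb
        rcases ih with h | h | h
        · exact Or.inr (Or.inl h)
        · exact Or.inr (Or.inl h)
        · exact Or.inr (Or.inr h)
    · have hadj : (H.deleteEdges {s(u,v)}).Adj a b := by
        rw [SimpleGraph.deleteEdges_adj]
        exact ⟨hab, by simpa using he⟩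
      rcases ih with h | h | h
      · exact Or.inl (hadj.reachable.trans h)
      · exact Or.inr (Or.inl h)
      · exact Or.inr (Or.inr h)

/-- tsum over an `insert`. -/
lemma tsum_insert_ennreal {α : Type*} (f : α → ℝ≥0∞) {e : α} {S : Set α} (he : e ∉ S) :
    ∑' x : (insert e S : Set α), f x = f e + ∑' x : S, f x := by
  rw [Set.insert_eq, ENNReal.summable.tsum_union_disjoint (Set.disjoint_singleton_left.mpr he)
      ENNReal.summable, tsum_singleton]

/-- Edge-swap: replacing an edge of a tree by a strictly shorter cross edge yields
a strictly better tree. -/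
lemma swap_tree {V : Type*} [MetricSpace V] {H : SimpleGraph V} (hH : H.IsTree)
    {u v a b : V} (huv : H.Adj u v) (hab : a ≠ b)
    (ha : (H.deleteEdges {s(u,v)}).Reachable u a)
    (hb : (H.deleteEdges {s(u,v)}).Reachable v b)
    (hlen : edist a b < edist u v) (hfin : graphLen H < ⊤) :
    ∃ H' : SimpleGraph V, H'.IsTree ∧ graphLen H' < graphLen H := by
  classical
  set G : SimpleGraph V := H.deleteEdges {s(u,v)} with hG
  -- the edge s(u,v) is a bridge of H
  have hbr : ¬ G.Reachable u v := by
    have := (isAcyclic_iff_forall_adj_isBridge.mp hH.2) huv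
    exact this
  have hGH : G ≤ H := SimpleGraph.deleteEdges_le _
  have hnadj : ¬ G.Adj a b := fun h =>
    hbr (ha.trans ((h.reachable).trans hb.symm))
  set H' : SimpleGraph V := G ⊔ SimpleGraph.fromEdgeSet {s(a,b)} with hH'
  have hGH' : G ≤ H' := le_sup_left
  have hadj' : H'.Adj a b := by
    refine Or.inr ⟨rfl, hab⟩
  -- connectivity
  have hreachu : ∀ c : V, H'.Reachable u c := by
    intro c
    obtain ⟨p⟩ := hH.1.preconnected u c
    rcases reachable_delete_cases (u := u) (v := v) p with h | h | h
    · exact h.mono hGH'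
    · exact h.mono hGH'
    · refine Reachable.trans ?_ (h.mono hGH')
      exact (ha.mono hGH').trans ((hadj'.reachable).trans (hb.mono hGH').symm)
  have hconn : H'.Connected := by
    rw [SimpleGraph.connected_iff]
    exact ⟨fun x y => (hreachu x).symm.trans (hreachu y), ⟨u⟩⟩
  -- acyclicity
  have hacyc : H'.IsAcyclic := by
    intro w c hc
    by_cases hmem : s(a, b) ∈ c.edges
    · have := SimpleGraph.adj_and_reachable_delete_edges_iff_exists_cycle.mpr ⟨w, c, hc, hmem⟩
      have hle : H' \ SimpleGraph.fromEdgeSet {s(a,b)} ≤ G := by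
        intro x y hxy
        rcases hxy with ⟨hxy1 | hxy2, hne⟩
        · exact hxy1
        · exact absurd ⟨hxy2.1, hxy2.2⟩ hne
      have hreach : G.Reachable a b := this.2.mono hle
      exact hbr (ha.trans (hreach.trans hb.symm))
    · have hsub : ∀ e ∈ c.edges, e ∈ H.edgeSet := by
        intro e hec
        have : e ∈ H'.edgeSet := c.edges_subset_edgeSet hec
        rw [hH', SimpleGraph.edgeSet_sup, SimpleGraph.edgeSet_fromEdgeSet] at this
        rcases this with h | h
        · exact (SimpleGraph.edgeSet_subset_edgeSet.mpr hGH) h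
        · exact absurd h.1 (by rintro rfl; exact hmem hec)
      exact hH.2 (c.transfer H hsub) (hc.transfer hsub)
  -- length
  have huv_mem : s(u,v) ∈ H.edgeSet := huv
  have hEdel : G.edgeSet = H.edgeSet \ {s(u,v)} := SimpleGraph.edgeSet_deleteEdges _
  have hnotmem_uv : s(u,v) ∉ H.edgeSet \ {s(u,v)} := fun h => h.2 rfl
  have hnotmem_ab : s(a,b) ∉ H.edgeSet \ {s(u,v)} := by
    rw [← hEdel]
    exact fun h => hnadj h
  have hE : H.edgeSet = insert s(u,v) (H.edgeSet \ {s(u,v)}) := by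
    rw [Set.insert_diff_singleton, Set.insert_eq_of_mem huv_mem]
  have hE' : H'.edgeSet = insert s(a,b) (H.edgeSet \ {s(u,v)}) := by
    rw [hH', SimpleGraph.edgeSet_sup, SimpleGraph.edgeSet_fromEdgeSet, hEdel]
    have hdiag : ({s(a,b)} : Set (Sym2 V)) \ {e | e.IsDiag} = {s(a,b)} := by
      ext e
      simp only [Set.mem_diff, Set.mem_singleton_iff, Set.mem_setOf_eq, and_iff_left_iff_imp]
      rintro rfl
      exact fun hd => hab (Sym2.mk_isDiag_iff.mp hd)
    rw [show Sym2.diagSet = {e : Sym2 V | e.IsDiag} from rfl, hdiag, Set.union_comm, ← Set.insert_eq]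
  set R : ℝ≥0∞ := ∑' e : (H.edgeSet \ {s(u,v)} : Set (Sym2 V)), edgeLen (e : Sym2 V) with hR
  have hlenH : graphLen H = edist u v + R := by
    rw [graphLen, tsum_congr_set_coe (fun e => edgeLen e) hE,
      tsum_insert_ennreal _ hnotmem_uv, edgeLen_mk]
  have hlenH' : graphLen H' = edist a b + R := by
    rw [graphLen, tsum_congr_set_coe (fun e => edgeLen e) hE',
      tsum_insert_ennreal _ hnotmem_ab, edgeLen_mk]
  have hRne : R ≠ ⊤ := by
    intro hR_top
    rw [hlenH, hR_top, add_top] at hfin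
    exact (lt_irrefl _ hfin)
  refine ⟨H', ⟨hconn, hacyc⟩, ?_⟩
  rw [hlenH, hlenH']
  exact ENNReal.add_lt_add_right hRne hlen

end Aux

/-- The set `{1/n : n ≥ 1} ∪ {0} ⊆ ℝ` admits no minimal spanning tree. -/
theorem no_mst_harmonic_with_zero :
    ¬ ∃ T : SimpleGraph ({x : ℝ | x = 0 ∨ ∃ n : ℕ, 1 ≤ n ∧ x = 1 / (n : ℝ)}),
      IsMST T := by
  rintro ⟨T, hT, hfin, hmin⟩
  -- the vertex 0
  obtain ⟨z, hzval⟩ : ∃ z : ({x : ℝ | x = 0 ∨ ∃ n : ℕ, 1 ≤ n ∧ x = 1 / (n : ℝ)}),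
      (z : ℝ) = 0 := ⟨⟨0, Or.inl rfl⟩, rfl⟩
  obtain ⟨one, honeval⟩ : ∃ o : ({x : ℝ | x = 0 ∨ ∃ n : ℕ, 1 ≤ n ∧ x = 1 / (n : ℝ)}),
      (o : ℝ) = 1 := ⟨⟨1, Or.inr ⟨1, le_refl 1, by norm_num⟩⟩, rfl⟩
  have hzone : z ≠ one := by
    intro h
    rw [h, honeval] at hzval
    norm_num at hzval
  -- 0 has a neighbor w
  obtain ⟨p⟩ := hT.isConnected.preconnected z one
  obtain ⟨w, hzw, -, -⟩ := SimpleGraph.Walk.exists_eq_cons_of_ne hzone p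
  -- w = 1/m for some m ≥ 1
  obtain ⟨m, hm1, hwm⟩ : ∃ m : ℕ, 1 ≤ m ∧ (w : ℝ) = 1 / (m : ℝ) := by
    rcases w.2 with h0 | h
    · exact absurd (Subtype.ext (h0.trans hzval.symm)) hzw.ne'
    · exact h
  have hmpos : (0 : ℝ) < (m : ℝ) := by exact_mod_cast hm1
  have hm0 : (m : ℝ) ≠ 0 := ne_of_gt hmpos
  -- the vertex x = 1/(2m)
  obtain ⟨x, hxval⟩ : ∃ x : ({x : ℝ | x = 0 ∨ ∃ n : ℕ, 1 ≤ n ∧ x = 1 / (n : ℝ)}),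
      (x : ℝ) = 1 / (2 * (m : ℝ)) :=
    ⟨⟨1 / ((2 * m : ℕ) : ℝ), Or.inr ⟨2 * m, by omega, rfl⟩⟩, by push_cast; ring⟩
  have h2mpos : (0 : ℝ) < 2 * (m : ℝ) := by linarith
  have hhalf : (1 : ℝ) / (2 * (m : ℝ)) < 1 / (m : ℝ) :=
    one_div_lt_one_div_of_lt hmpos (by linarith)
  have hxpos : (0 : ℝ) < (x : ℝ) := by rw [hxval]; positivity
  have hxltw : (x : ℝ) < (w : ℝ) := by rw [hxval, hwm]; exact hhalf
  -- distances
  have hdzw : edist z w = ENNReal.ofReal (1 / (m : ℝ)) := by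
    rw [Subtype.edist_eq, edist_dist, Real.dist_eq, hzval, hwm, zero_sub, abs_neg,
      abs_of_pos (by positivity)]
  have hdzx : edist z x = ENNReal.ofReal (1 / (2 * (m : ℝ))) := by
    rw [Subtype.edist_eq, edist_dist, Real.dist_eq, hzval, hxval, zero_sub, abs_neg,
      abs_of_pos (by positivity)]
  have hdxw : edist x w = ENNReal.ofReal (1 / (2 * (m : ℝ))) := by
    rw [Subtype.edist_eq, edist_dist, Real.dist_eq, hxval, hwm,
      abs_of_neg (sub_neg.mpr hhalf)]
    congr 1
    field_simp
    ring
  have hltE : ENNReal.ofReal (1 / (2 * (m : ℝ))) < ENNReal.ofReal (1 / (m : ℝ)) :=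
    (ENNReal.ofReal_lt_ofReal_iff (by positivity)).mpr hhalf
  have hzx : z ≠ x := fun h => absurd (hzval ▸ congrArg Subtype.val h).symm (ne_of_gt hxpos)
  have hxw : x ≠ w := fun h => absurd (congrArg Subtype.val h) (ne_of_lt hxltw)
  -- which side of the deleted edge is x on?
  obtain ⟨q⟩ := hT.isConnected.preconnected z x
  have hcases := reachable_delete_cases (u := z) (v := w) q
  have hswap : ∃ T' : SimpleGraph ({x : ℝ | x = 0 ∨ ∃ n : ℕ, 1 ≤ n ∧ x = 1 / (n : ℝ)}), T'.IsTree ∧ graphLen T' < graphLen T := by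
    rcases hcases with h | h | h
    · refine swap_tree hT hzw hxw h (SimpleGraph.Reachable.refl _) ?_ hfin
      rw [hdxw, hdzw]; exact hltE
    · refine swap_tree hT hzw hxw h (SimpleGraph.Reachable.refl _) ?_ hfin
      rw [hdxw, hdzw]; exact hltE
    · refine swap_tree hT hzw hzx (SimpleGraph.Reachable.refl _) h ?_ hfin
      rw [hdzx, hdzw]; exact hltE
  obtain ⟨T', hT'tree, hT'lt⟩ := hswap
  exact absurd (hmin T' hT'tree) (not_le.mpr hT'lt)

end MSTPaper
end

section
/- Let M = {1/n : n ≥ 1} ∪ {−1/n : n ≥ 1} ⊆ ℝ with the standard metric. Then there is no minimal spanning tree on (M, ρ). -/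
open scoped ENNReal

namespace MSTPaper

variable {M : Type*}

def parentGraph (p : M → M) : SimpleGraph M where
  Adj x y := x ≠ y ∧ (p x = y ∨ p y = x)
  symm := ⟨by rintro x y ⟨h, h'⟩; exact ⟨h.symm, h'.symm⟩⟩
  loopless := ⟨by rintro x ⟨h, -⟩; exact h rfl⟩

variable {p : M → M} {h : M → ℕ} {r : M}

theorem parent_iterate_height (hp : ∀ x, x ≠ r → h (p x) < h x) (hr : p r = r) :
    ∀ (m : ℕ) (x : M), h (p^[m] x) ≤ h x := by
  intro m
  induction m with
  | zero => intro x; simp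
  | succ m ih =>
    intro x
    rw [Function.iterate_succ_apply]
    refine (ih (p x)).trans ?_
    by_cases hx : x = r
    · simp [hx, hr]
    · exact (hp x hx).le

theorem parent_no_periodic (hp : ∀ x, x ≠ r → h (p x) < h x) (hr : p r = r)
    {x : M} (hx : x ≠ r) {m : ℕ} (hm : p^[m+1] x = x) : False := by
  have h1 : h (p^[m] (p x)) ≤ h (p x) := parent_iterate_height hp hr m (p x)
  rw [← Function.iterate_succ_apply, hm] at h1
  exact absurd (hp x hx) (not_lt.mpr h1)

theorem parentGraph_connected (hp : ∀ x, x ≠ r → h (p x) < h x) :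
    (parentGraph p).Connected := by
  rw [SimpleGraph.connected_iff_exists_forall_reachable]
  refine ⟨r, fun x => ?_⟩
  suffices H : ∀ (n : ℕ) (x : M), h x = n → (parentGraph p).Reachable r x from H (h x) x rfl
  intro n
  induction n using Nat.strong_induction_on with
  | _ n ih =>
    intro x hn
    subst hn
    by_cases hx : x = r
    · subst hx; exact SimpleGraph.Reachable.refl _
    · have hlt := hp x hx
      have hadj : (parentGraph p).Adj x (p x) :=
        ⟨fun e => absurd hlt (by rw [← e]; exact lt_irrefl _), Or.inl rfl⟩
      exact (ih _ hlt (p x) rfl).trans hadj.symm.reachable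

theorem parentGraph_acyclic (hp : ∀ x, x ≠ r → h (p x) < h x) (hr : p r = r) :
    (parentGraph p).IsAcyclic := by
  rw [SimpleGraph.isAcyclic_iff_forall_adj_isBridge]
  -- first: every edge s(x, p x) with x ≠ r is a bridge
  have key : ∀ x : M, x ≠ r → (parentGraph p).IsBridge s(x, p x) := by
    intro x hx
    have hpx : p x ≠ x := fun e => absurd (hp x hx) (by rw [e]; exact lt_irrefl _)
    rw [SimpleGraph.isBridge_iff]
    · -- not reachable in deleted graph
      set G' := parentGraph p \ SimpleGraph.fromEdgeSet {s(x, p x)} with hG'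
      intro hreach
      -- every vertex reachable from x in G' is a descendant of x
      have desc : ∀ (y z : M) (w : G'.Walk y z), (∃ k, p^[k] y = x) → ∃ k, p^[k] z = x := by
        intro y z w
        induction w with
        | nil => exact id
        | @cons a b c hab w ih =>
          rintro ⟨k, hk⟩
          apply ih
          rw [SimpleGraph.sdiff_adj, SimpleGraph.fromEdgeSet_adj] at hab
          obtain ⟨⟨hne, hor⟩, hnot⟩ := hab
          rcases hor with hpa | hpb
          · -- b = p a
            rcases Nat.eq_zero_or_pos k with hk0 | hkpos
            · -- a = x, so the edge is the deleted one
              subst hk0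
              simp only [Function.iterate_zero_apply] at hk
              exact absurd ⟨by rw [hk, ← hpa, hk]; exact rfl, hne⟩ hnot
            · obtain ⟨k', rfl⟩ : ∃ k', k = k' + 1 := ⟨k - 1, (Nat.succ_pred_eq_of_pos hkpos).symm⟩
              exact ⟨k', by rw [← hpa, ← Function.iterate_succ_apply, hk]⟩
          · exact ⟨k + 1, by rw [Function.iterate_succ_apply, hpb, hk]⟩
      obtain ⟨w⟩ := hreach
      obtain ⟨k, hk⟩ := desc x (p x) w ⟨0, rfl⟩
      exact parent_no_periodic hp hr hx (by rw [Function.iterate_succ_apply, hk])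
  intro v w hvw
  rcases hvw.2 with h1 | h1
  · have hv : v ≠ r := by
      rintro rfl; rw [hr] at h1; exact hvw.1 h1
    simpa [h1] using key v hv
  · have hw : w ≠ r := by
      rintro rfl; rw [hr] at h1; exact hvw.1 h1.symm
    have := key w hw
    rwa [h1, Sym2.eq_swap] at this

theorem parentGraph_isTree (hp : ∀ x, x ≠ r → h (p x) < h x) (hr : p r = r) :
    (parentGraph p).IsTree :=
  ⟨parentGraph_connected hp, parentGraph_acyclic hp hr⟩


theorem parentGraph_edgeSet (hp : ∀ x, x ≠ r → h (p x) < h x) (hr : p r = r) :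
    (parentGraph p).edgeSet = Set.range (fun x : {x : M // x ≠ r} => s(x.1, p x.1)) := by
  ext e
  induction e with
  | _ v w =>
    simp only [SimpleGraph.mem_edgeSet, Set.mem_range]
    constructor
    · rintro ⟨hne, h1 | h1⟩
      · have hv : v ≠ r := by rintro rfl; rw [hr] at h1; exact hne h1
        exact ⟨⟨v, hv⟩, by rw [h1]⟩
      · have hw : w ≠ r := by rintro rfl; rw [hr] at h1; exact hne h1.symm
        exact ⟨⟨w, hw⟩, by rw [h1, Sym2.eq_swap]⟩
    · rintro ⟨⟨x, hx⟩, hxe⟩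
      have hpx : p x ≠ x := fun e => absurd (hp x hx) (by rw [e]; exact lt_irrefl _)
      have : (parentGraph p).Adj x (p x) := ⟨Ne.symm hpx, Or.inl rfl⟩
      rw [← SimpleGraph.mem_edgeSet] at this ⊢
      simpa [← hxe] using this

theorem parentGraph_edgeFun_injective (hp : ∀ x, x ≠ r → h (p x) < h x) :
    Function.Injective (fun x : {x : M // x ≠ r} => s(x.1, p x.1)) := by
  rintro ⟨x, hx⟩ ⟨y, hy⟩ hxy
  simp only [Sym2.eq, Sym2.rel_iff', Prod.mk.injEq, Prod.swap_prod_mk] at hxy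
  rcases hxy with ⟨h1, h2⟩ | ⟨h1, h2⟩
  · exact Subtype.ext h1
  · exfalso
    have hxlt := hp x hx
    have hylt := hp y hy
    rw [← h1] at hylt; rw [h2] at hxlt
    omega

theorem parentGraph_len_le [MetricSpace M] (hp : ∀ x, x ≠ r → h (p x) < h x)
    (hr : p r = r) :
    graphLen (parentGraph p) ≤ ∑' x : M, edist x (p x) := by
  rw [graphLen]
  have := parentGraph_edgeSet hp hr
  rw [show (fun e : (parentGraph p).edgeSet => edgeLen (e : Sym2 M))
      = fun e : (parentGraph p).edgeSet => edgeLen (e : Sym2 M) from rfl]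
  calc (∑' e : (parentGraph p).edgeSet, edgeLen (e : Sym2 M))
      = ∑' e : (Set.range (fun x : {x : M // x ≠ r} => s(x.1, p x.1))), edgeLen (e : Sym2 M) := by
        rw [this]
    _ = ∑' x : {x : M // x ≠ r}, edgeLen s(x.1, p x.1) :=
        tsum_range (fun e => edgeLen e) (parentGraph_edgeFun_injective hp)
    _ = ∑' x : {x : M // x ≠ r}, edist x.1 (p x.1) := rfl
    _ ≤ ∑' x : M, edist x (p x) :=
        Summable.tsum_le_tsum_of_inj (Subtype.val) Subtype.val_injective
          (fun _ _ => zero_le) (fun _ => le_rfl) ENNReal.summable ENNReal.summable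



abbrev Mset : Set ℝ := {x : ℝ | ∃ n : ℕ, 1 ≤ n ∧ (x = 1 / (n : ℝ) ∨ x = -(1 / (n : ℝ)))}

noncomputable def mpos (n : ℕ) : Mset :=
  ⟨1 / ((n : ℝ) + 1), ⟨n + 1, le_add_self, Or.inl (by push_cast; ring)⟩⟩

noncomputable def mneg (n : ℕ) : Mset :=
  ⟨-(1 / ((n : ℝ) + 1)), ⟨n + 1, le_add_self, Or.inr (by push_cast; ring)⟩⟩

lemma mpos_val (n : ℕ) : (mpos n : ℝ) = 1 / ((n : ℝ) + 1) := rfl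
lemma mneg_val (n : ℕ) : (mneg n : ℝ) = -(1 / ((n : ℝ) + 1)) := rfl

lemma npos (n : ℕ) : (0:ℝ) < (n : ℝ) + 1 := by positivity

lemma mpos_inj : Function.Injective mpos := by
  intro m n hmn
  have : (1:ℝ) / (m + 1) = 1 / (n + 1) := congrArg Subtype.val hmn
  field_simp at this
  exact_mod_cast (by linarith : (m:ℝ) = n)

lemma mneg_inj : Function.Injective mneg := by
  intro m n hmn
  have : -((1:ℝ) / (m + 1)) = -(1 / (n + 1)) := congrArg Subtype.val hmn
  rw [neg_inj] at this
  field_simp at this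
  exact_mod_cast (by linarith : (m:ℝ) = n)

lemma mpos_ne_mneg (m n : ℕ) : mpos m ≠ mneg n := by
  intro hmn
  have : (1:ℝ) / (m + 1) = -(1 / (n + 1)) := congrArg Subtype.val hmn
  have h1 : (0:ℝ) < 1 / (m + 1) := by positivity
  have h2 : (0:ℝ) < 1 / (n + 1) := by positivity
  linarith

noncomputable def mFun : ℕ ⊕ ℕ → Mset := Sum.elim mpos mneg

lemma mFun_bijective : Function.Bijective mFun := by
  constructor
  · rintro (m | m) (n | n) hmn
    · rw [mpos_inj hmn]
    · exact absurd hmn (mpos_ne_mneg m n)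
    · exact absurd hmn.symm (mpos_ne_mneg n m)
    · rw [mneg_inj hmn]
  · rintro ⟨x, n, hn, hx | hx⟩
    · refine ⟨Sum.inl (n - 1), ?_⟩
      simp only [mFun, Sum.elim_inl]
      apply Subtype.ext
      show (1:ℝ) / ((n - 1 : ℕ) + 1) = x
      have : ((n - 1 : ℕ) : ℝ) = (n : ℝ) - 1 := by
        push_cast [Nat.cast_sub hn]; ring
      rw [this, hx]; ring_nf
    · refine ⟨Sum.inr (n - 1), ?_⟩
      simp only [mFun, Sum.elim_inr]
      apply Subtype.ext
      show -((1:ℝ) / ((n - 1 : ℕ) + 1)) = x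
      have : ((n - 1 : ℕ) : ℝ) = (n : ℝ) - 1 := by
        push_cast [Nat.cast_sub hn]; ring
      rw [this, hx]; ring_nf

noncomputable def mEquiv : ℕ ⊕ ℕ ≃ Mset := Equiv.ofBijective mFun mFun_bijective



-- index-level parent and height
def P (N : ℕ) : ℕ ⊕ ℕ → ℕ ⊕ ℕ
  | .inl n => if n < N then .inl (n+1) else if n = N then .inl N else .inl (n-1)
  | .inr n => if n < N then .inr (n+1) else if n = N then .inl N else .inr (n-1)

def H (N : ℕ) : ℕ ⊕ ℕ → ℕ
  | .inl n => if n ≤ N then N - n else n - N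
  | .inr n => (if n ≤ N then N - n else n - N) + 1

lemma P_root (N : ℕ) : P N (.inl N) = .inl N := by simp [P]

lemma H_decrease (N : ℕ) (i : ℕ ⊕ ℕ) (hi : i ≠ .inl N) : H N (P N i) < H N i := by
  rcases i with n | n
  · have hn : n ≠ N := fun e => hi (by rw [e])
    rcases lt_trichotomy n N with h | h | h
    · simp only [P, if_pos h, H]
      split <;> split <;> omega
    · exact absurd h hn
    · simp only [P, if_neg (by omega : ¬ n < N), if_neg hn, H]
      split <;> split <;> omega
  · rcases lt_trichotomy n N with h | h | h
    · simp only [P, if_pos h, H]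
      split <;> split <;> omega
    · subst h
      simp [P, H]
    · simp only [P, if_neg (by omega : ¬ n < N), if_neg (by omega : n ≠ N), H]
      split <;> split <;> omega

-- the real sequence
noncomputable def useq (n : ℕ) : ℝ := 1 / ((n : ℝ) + 1)

lemma useq_pos (n : ℕ) : 0 < useq n := by unfold useq; positivity

lemma useq_anti {m n : ℕ} (h : m ≤ n) : useq n ≤ useq m := by
  unfold useq
  apply one_div_le_one_div_of_le
  · positivity
  · have : (m:ℝ) ≤ (n:ℝ) := Nat.cast_le.mpr h
    linarith

noncomputable def vseq (N n : ℕ) : ℝ :=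
  if n < N then useq n - useq (n+1) else if n = N then 0 else useq (n-1) - useq n

lemma vseq_nonneg (N n : ℕ) : 0 ≤ vseq N n := by
  unfold vseq
  split
  · linarith [useq_anti (Nat.le_succ n)]
  · split
    · exact le_rfl
    · linarith [useq_anti (Nat.sub_le n 1)]

lemma vseq_sum (N m : ℕ) :
    ∑ i ∈ Finset.range m, vseq N i = 1 - (if m ≤ N then useq m else useq (m-1)) := by
  induction m with
  | zero => simp [useq]
  | succ m ih =>
    rw [Finset.sum_range_succ, ih]
    rcases lt_trichotomy m N with h | h | h
    · rw [vseq, if_pos h, if_pos (by omega), if_pos (by omega)]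
      ring
    · subst h
      rw [vseq, if_neg (lt_irrefl m), if_pos rfl, if_pos le_rfl,
        if_neg (by omega), Nat.add_sub_cancel]
      ring
    · rw [vseq, if_neg (by omega), if_neg (by omega), if_neg (by omega),
        if_neg (by omega), Nat.add_sub_cancel]
      ring

lemma vseq_sum_le (N m : ℕ) : ∑ i ∈ Finset.range m, vseq N i ≤ 1 := by
  rw [vseq_sum]
  have h1 := useq_pos m
  have h2 := useq_pos (m-1)
  split <;> linarith

lemma vseq_tsum_le (N : ℕ) : (∑' n : ℕ, ENNReal.ofReal (vseq N n)) ≤ 1 := by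
  rw [ENNReal.tsum_eq_iSup_sum]
  apply iSup_le
  intro s
  obtain ⟨m, hm⟩ := s.exists_nat_subset_range
  calc (∑ i ∈ s, ENNReal.ofReal (vseq N i))
      ≤ ∑ i ∈ Finset.range m, ENNReal.ofReal (vseq N i) :=
        Finset.sum_le_sum_of_subset hm
    _ = ENNReal.ofReal (∑ i ∈ Finset.range m, vseq N i) :=
        (ENNReal.ofReal_sum_of_nonneg (fun i _ => vseq_nonneg N i)).symm
    _ ≤ ENNReal.ofReal 1 := ENNReal.ofReal_le_ofReal (vseq_sum_le N m)
    _ = 1 := ENNReal.ofReal_one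

noncomputable def mParent (N : ℕ) : Mset → Mset := fun x => mEquiv (P N (mEquiv.symm x))
noncomputable def mHeight (N : ℕ) : Mset → ℕ := fun x => H N (mEquiv.symm x)
noncomputable def mRoot (N : ℕ) : Mset := mEquiv (.inl N)

lemma mParent_root (N : ℕ) : mParent N (mRoot N) = mRoot N := by
  simp [mParent, mRoot, P_root]

lemma mParent_decrease (N : ℕ) : ∀ x : Mset, x ≠ mRoot N →
    mHeight N (mParent N x) < mHeight N x := by
  intro x hx
  unfold mParent mHeight
  rw [Equiv.symm_apply_apply]
  apply H_decrease
  intro he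
  exact hx (by rw [mRoot, ← he, Equiv.apply_symm_apply])

noncomputable def mTree (N : ℕ) : SimpleGraph Mset := parentGraph (mParent N)

lemma mTree_isTree (N : ℕ) : (mTree N).IsTree :=
  parentGraph_isTree (mParent_decrease N) (mParent_root N)

lemma tsum_sum_type (f : ℕ ⊕ ℕ → ℝ≥0∞) :
    ∑' i, f i = (∑' n, f (.inl n)) + ∑' n, f (.inr n) := by
  rw [← Summable.tsum_add_tsum_compl (s := Set.range Sum.inl) ENNReal.summable ENNReal.summable,
    Set.compl_range_inl, tsum_range f Sum.inl_injective, tsum_range f Sum.inr_injective]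

lemma edist_mpos (a b : ℕ) :
    edist (mpos a) (mpos b) = ENNReal.ofReal |useq a - useq b| := by
  rw [edist_dist, Subtype.dist_eq, mpos_val, mpos_val, Real.dist_eq]
  rfl

lemma edist_mneg (a b : ℕ) :
    edist (mneg a) (mneg b) = ENNReal.ofReal |useq a - useq b| := by
  rw [edist_dist, Subtype.dist_eq, mneg_val, mneg_val, Real.dist_eq]
  congr 1
  rw [show -(1 / ((a:ℝ)+1)) - -(1 / ((b:ℝ)+1)) = -(1/((a:ℝ)+1) - 1/((b:ℝ)+1)) by ring, abs_neg]
  rfl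

lemma edist_cross (N : ℕ) :
    edist (mneg N) (mpos N) = ENNReal.ofReal (2 * useq N) := by
  rw [edist_dist, Subtype.dist_eq, mneg_val, mpos_val, Real.dist_eq]
  congr 1
  have := useq_pos N
  rw [show -(1 / ((N:ℝ)+1)) - 1 / ((N:ℝ)+1) = -(2 * useq N) by unfold useq; ring, abs_neg,
    abs_of_nonneg (by linarith)]

lemma mEquiv_inl (n : ℕ) : mEquiv (.inl n) = mpos n := rfl
lemma mEquiv_inr (n : ℕ) : mEquiv (.inr n) = mneg n := rfl

lemma term_inl (N n : ℕ) :
    edist (mEquiv (.inl n)) (mEquiv (P N (.inl n))) = ENNReal.ofReal (vseq N n) := by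
  rcases lt_trichotomy n N with h | h | h
  · rw [show P N (.inl n) = .inl (n+1) by simp [P, h], mEquiv_inl, mEquiv_inl, edist_mpos,
      vseq, if_pos h, abs_of_nonneg (by linarith [useq_anti (Nat.le_succ n)])]
  · subst h
    rw [P_root]
    simp [vseq, edist_self]
  · rw [show P N (.inl n) = .inl (n-1) by simp only [P]; rw [if_neg (by omega), if_neg (by omega)], mEquiv_inl, mEquiv_inl, edist_mpos,
      vseq, if_neg (by omega), if_neg (by omega), abs_sub_comm,
      abs_of_nonneg (by linarith [useq_anti (Nat.sub_le n 1)])]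

lemma term_inr (N n : ℕ) :
    edist (mEquiv (.inr n)) (mEquiv (P N (.inr n)))
      = ENNReal.ofReal (vseq N n) + (if n = N then ENNReal.ofReal (2 * useq N) else 0) := by
  rcases lt_trichotomy n N with h | h | h
  · rw [show P N (.inr n) = .inr (n+1) by simp [P, h], mEquiv_inr, mEquiv_inr, edist_mneg,
      vseq, if_pos h, abs_of_nonneg (by linarith [useq_anti (Nat.le_succ n)]),
      if_neg (by omega), add_zero]
  · subst h
    rw [show P n (.inr n) = .inl n by simp [P], mEquiv_inr, mEquiv_inl, edist_cross,
      vseq, if_neg (lt_irrefl n), if_pos rfl, if_pos rfl]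
    simp
  · rw [show P N (.inr n) = .inr (n-1) by simp only [P]; rw [if_neg (by omega), if_neg (by omega)], mEquiv_inr, mEquiv_inr, edist_mneg,
      vseq, if_neg (by omega), if_neg (by omega), abs_sub_comm,
      abs_of_nonneg (by linarith [useq_anti (Nat.sub_le n 1)]), if_neg (by omega), add_zero]

lemma mTree_len_le (N : ℕ) :
    graphLen (mTree N) ≤ 2 + ENNReal.ofReal (2 * useq N) := by
  refine (parentGraph_len_le (mParent_decrease N) (mParent_root N)).trans ?_
  rw [← Equiv.tsum_eq mEquiv (fun x => edist x (mParent N x))]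
  have hP : ∀ i, mParent N (mEquiv i) = mEquiv (P N i) := by
    intro i; rw [mParent, Equiv.symm_apply_apply]
  calc (∑' i, edist (mEquiv i) (mParent N (mEquiv i)))
      = ∑' i, edist (mEquiv i) (mEquiv (P N i)) := by simp_rw [hP]
    _ = (∑' n, edist (mEquiv (.inl n)) (mEquiv (P N (.inl n))))
        + ∑' n, edist (mEquiv (.inr n)) (mEquiv (P N (.inr n))) :=
        tsum_sum_type _
    _ = (∑' n, ENNReal.ofReal (vseq N n))
        + ∑' n, (ENNReal.ofReal (vseq N n) + if n = N then ENNReal.ofReal (2 * useq N) else 0) := by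
        rw [tsum_congr (term_inl N), tsum_congr (term_inr N)]
    _ = (∑' n, ENNReal.ofReal (vseq N n))
        + ((∑' n, ENNReal.ofReal (vseq N n))
          + ∑' n, if n = N then ENNReal.ofReal (2 * useq N) else 0) := by
        rw [ENNReal.tsum_add]
    _ ≤ 1 + (1 + ENNReal.ofReal (2 * useq N)) := by
        gcongr
        · exact vseq_tsum_le N
        · exact vseq_tsum_le N
        · rw [tsum_ite_eq]
    _ = 2 + ENNReal.ofReal (2 * useq N) := by ring

lemma walk_edist_le {X : Type*} [MetricSpace X] {G : SimpleGraph X} :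
    ∀ {x y : X} (w : G.Walk x y), edist x y ≤ (w.edges.map edgeLen).sum := by
  intro x y w
  induction w with
  | nil => simp
  | @cons a b c hab w ih =>
    calc edist a c ≤ edist a b + edist b c := edist_triangle a b c
      _ ≤ edist a b + (w.edges.map edgeLen).sum := by gcongr
      _ = ((SimpleGraph.Walk.cons hab w).edges.map edgeLen).sum := by
          rw [SimpleGraph.Walk.edges_cons, List.map_cons, List.sum_cons]
          rfl

lemma finset_sum_le_graphLen {X : Type*} [MetricSpace X] {G : SimpleGraph X}
    (s : Finset (Sym2 X)) (hs : ∀ e ∈ s, e ∈ G.edgeSet) :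
    ∑ e ∈ s, edgeLen e ≤ graphLen G := by
  rw [graphLen, tsum_subtype]
  calc (∑ e ∈ s, edgeLen e) = ∑ e ∈ s, (G.edgeSet).indicator edgeLen e :=
      Finset.sum_congr rfl fun e he => (Set.indicator_of_mem (hs e he) _).symm
    _ ≤ ∑' e, (G.edgeSet).indicator edgeLen e := ENNReal.sum_le_tsum s

lemma exists_adj_of_reachable {X : Type*} {G : SimpleGraph X} {x y : X}
    (h : G.Reachable x y) (hxy : x ≠ y) : ∃ b, G.Adj x b := by
  obtain ⟨w⟩ := h
  cases w with
  | nil => exact absurd rfl hxy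
  | cons h _ => exact ⟨_, h⟩

lemma tree_len_lower (T : SimpleGraph Mset) (hT : T.IsTree) :
    ∃ d : ℝ≥0∞, 0 < d ∧ 2 + d ≤ graphLen T := by
  classical
  have hconn := hT.isConnected
  -- a path from 1 to -1
  obtain ⟨w0⟩ := hconn.preconnected (mpos 0) (mneg 0)
  set p := w0.bypass with hp
  have hpath : p.IsPath := SimpleGraph.Walk.bypass_isPath w0
  -- a vertex not on the path
  obtain ⟨v, ⟨n, rfl⟩, hv⟩ :=
    (Set.infinite_range_of_injective mpos_inj).exists_notMem_finset p.support.toFinset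
  rw [List.mem_toFinset] at hv
  have hva : mpos n ≠ mpos 0 := fun e => hv (by rw [e]; exact p.start_mem_support)
  -- an edge at v
  obtain ⟨b, hadj⟩ : ∃ b, T.Adj (mpos n) b :=
    exists_adj_of_reachable (hconn.preconnected (mpos n) (mpos 0)) hva
  refine ⟨edist (mpos n) b, edist_pos.mpr hadj.ne, ?_⟩
  have hnotmem : s(mpos n, b) ∉ p.edges.toFinset := by
    rw [List.mem_toFinset]
    intro hmem
    exact hv (p.fst_mem_support_of_mem_edges hmem)
  have h2 : edist (mpos 0) (mneg 0) = 2 := by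
    rw [edist_dist, Subtype.dist_eq, mpos_val, mneg_val, Real.dist_eq]
    norm_num
  calc 2 + edist (mpos n) b = edist (mpos n) b + edist (mpos 0) (mneg 0) := by
        rw [h2, add_comm]
    _ ≤ edist (mpos n) b + (p.edges.map edgeLen).sum := by
        gcongr; exact walk_edist_le p
    _ = edgeLen s(mpos n, b) + ∑ e ∈ p.edges.toFinset, edgeLen e := by
        rw [List.sum_toFinset _ hpath.isTrail.edges_nodup]
        rfl
    _ = ∑ e ∈ insert s(mpos n, b) p.edges.toFinset, edgeLen e := by
        rw [Finset.sum_insert hnotmem]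
    _ ≤ graphLen T := by
        apply finset_sum_le_graphLen
        intro e he
        rcases Finset.mem_insert.mp he with rfl | he
        · exact hadj
        · exact p.edges_subset_edgeSet (List.mem_toFinset.mp he)

/-- The set `{1/n : n ≥ 1} ∪ {-1/n : n ≥ 1} ⊆ ℝ` admits no minimal spanning tree. -/
theorem no_mst_two_sided_harmonic :
    ¬ ∃ T : SimpleGraph ({x : ℝ | ∃ n : ℕ, 1 ≤ n ∧ (x = 1 / (n : ℝ) ∨ x = -(1 / (n : ℝ)))}),
      IsMST T := by
  rintro ⟨T, hTree, -, hmin⟩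
  have hupper : ∀ N : ℕ, graphLen T ≤ 2 + ENNReal.ofReal (2 * useq N) :=
    fun N => (hmin _ (mTree_isTree N)).trans (mTree_len_le N)
  have hle2 : graphLen T ≤ 2 := by
    apply ENNReal.le_of_forall_pos_le_add
    intro ε hε _
    obtain ⟨N, hN⟩ := exists_nat_gt (2 / (ε : ℝ))
    have hε' : (0:ℝ) < (ε : ℝ) := hε
    have harith : 2 * useq N ≤ (ε : ℝ) := by
      have hN1 : (0:ℝ) < (N:ℝ) + 1 := by positivity
      rw [useq, mul_one_div, div_le_iff₀ hN1]
      have h2 : 2 / (ε:ℝ) < (N:ℝ) + 1 := hN.trans (by linarith)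
      calc (2:ℝ) = ε * (2 / ε) := by field_simp
        _ ≤ ε * ((N:ℝ) + 1) := by nlinarith
    refine (hupper N).trans ?_
    gcongr
    calc ENNReal.ofReal (2 * useq N) ≤ ENNReal.ofReal (ε:ℝ) :=
          ENNReal.ofReal_le_ofReal harith
      _ = (ε : ℝ≥0∞) := ENNReal.ofReal_coe_nnreal
  obtain ⟨d, hd, hlow⟩ := tree_len_lower T hTree
  have h1 : (2:ℝ≥0∞) + d ≤ 2 + 0 := by simpa using hlow.trans hle2
  have h2 : d ≤ 0 := (ENNReal.add_le_add_iff_left (by simp : (2:ℝ≥0∞) ≠ ⊤)).mp h1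
  exact absurd (le_antisymm h2 (zero_le : 0 ≤ d)) (by simpa using hd.ne')

end MSTPaper
end

section
/- Let (M, ρ) be a metric space admitting a minimal spanning tree. Then for every partition M = M₁' ⊔ M₂' into nonempty sets with ρ(M₁', M₂') > 0, the distance between M₁' and M₂' is attained: there exist v₁ ∈ M₁', v₂ ∈ M₂' with ρ(v₁, v₂) = ρ(M₁', M₂'). -/
open scoped ENNReal

namespace MSTPaper

variable {M : Type*}

open SimpleGraph

lemma exists_cross_edge {V : Type*} {G : SimpleGraph V} {M₁ M₂ : Set V}
    (hdisj : Disjoint M₁ M₂) (hunion : M₁ ∪ M₂ = Set.univ) :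
    ∀ {x y : V} (w : G.Walk x y), x ∈ M₁ → y ∈ M₂ →
      ∃ u v, u ∈ M₁ ∧ v ∈ M₂ ∧ s(u, v) ∈ w.edges := by
  intro x y w
  induction w with
  | nil =>
    intro hx hy
    exact absurd hy (Set.disjoint_left.mp hdisj hx)
  | @cons x z y h w' ih =>
    intro hx hy
    by_cases hz : z ∈ M₂
    · exact ⟨x, z, hx, hz, by simp⟩
    · have hz1 : z ∈ M₁ := by
        have hzu : z ∈ M₁ ∪ M₂ := hunion ▸ Set.mem_univ z
        rcases hzu with h1 | h2
        · exact h1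
        · exact absurd h2 hz
      obtain ⟨u, v, h1, h2, h3⟩ := ih hz1 hy
      exact ⟨u, v, h1, h2, by simp [h3]⟩

lemma reach_cases {V : Type*} {G : SimpleGraph V} (u v : V) :
    ∀ {x y : V}, G.Walk x y →
      (G \ fromEdgeSet {s(u, v)}).Reachable x y ∨
      ((G \ fromEdgeSet {s(u, v)}).Reachable x u ∧
        (G \ fromEdgeSet {s(u, v)}).Reachable v y) ∨
      ((G \ fromEdgeSet {s(u, v)}).Reachable x v ∧
        (G \ fromEdgeSet {s(u, v)}).Reachable u y) := by
  intro x y w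
  induction w with
  | nil => exact Or.inl (Reachable.refl _)
  | @cons x z y h w' ih =>
    by_cases he : s(x, z) = s(u, v)
    · rw [Sym2.eq_iff] at he
      rcases he with ⟨hx, hz⟩ | ⟨hx, hz⟩
      · subst hx; subst hz
        rcases ih with h1 | ⟨h1, h2⟩ | ⟨h1, h2⟩
        · exact Or.inr (Or.inl ⟨Reachable.refl _, h1⟩)
        · exact Or.inr (Or.inr ⟨h1.symm, h1.symm.trans h2⟩)
        · exact Or.inl h2
      · subst hx; subst hz
        rcases ih with h1 | ⟨h1, h2⟩ | ⟨h1, h2⟩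
        · exact Or.inr (Or.inr ⟨Reachable.refl _, h1⟩)
        · exact Or.inl h2
        · exact Or.inr (Or.inl ⟨h1.symm, h1.symm.trans h2⟩)
    · have hadj : (G \ fromEdgeSet {s(u, v)}).Adj x z := by
        rw [sdiff_adj, fromEdgeSet_adj]
        exact ⟨h, fun hc => he (Set.mem_singleton_iff.mp hc.1)⟩
      rcases ih with h1 | ⟨h1, h2⟩ | ⟨h1, h2⟩
      · exact Or.inl (hadj.reachable.trans h1)
      · exact Or.inr (Or.inl ⟨hadj.reachable.trans h1, h2⟩)
      · exact Or.inr (Or.inr ⟨hadj.reachable.trans h1, h2⟩)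

lemma reach_of_walk {V : Type*} {G G' : SimpleGraph V}
    (hadj : ∀ x y, G.Adj x y → G'.Reachable x y) :
    ∀ {x y : V}, G.Walk x y → G'.Reachable x y := by
  intro x y w
  induction w with
  | nil => exact Reachable.refl _
  | cons h w' ih => exact (hadj _ _ h).trans ih


/-- If a minimal spanning tree exists, then the distance between the parts of any
partition of `M` with positive distance is attained. -/
theorem dist_attained_of_mst [MetricSpace M] (h : ∃ T : SimpleGraph M, IsMST T)
    (M₁ M₂ : Set M) (hdisj : Disjoint M₁ M₂) (hunion : M₁ ∪ M₂ = Set.univ)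
    (h₁ : M₁.Nonempty) (h₂ : M₂.Nonempty) (hpos : 0 < setDist M₁ M₂) :
    ∃ v₁ ∈ M₁, ∃ v₂ ∈ M₂, edist v₁ v₂ = setDist M₁ M₂ := by
  classical
  obtain ⟨T, htree, hfin, hmin⟩ := h
  by_contra hno
  push_neg at hno
  set d := setDist M₁ M₂ with hd
  -- the distance is a lower bound for distances between crossing pairs
  have hd_le : ∀ {x y : M}, x ∈ M₁ → y ∈ M₂ → d ≤ edist x y := by
    intro x y hx hy
    calc d ≤ ⨅ y ∈ M₂, edist x y := biInf_le _ hx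
    _ ≤ edist x y := biInf_le _ hy
  -- crossing edges
  set Cr : Set T.edgeSet :=
    {e | ∃ u v, (e : Sym2 M) = s(u, v) ∧ u ∈ M₁ ∧ v ∈ M₂} with hCr
  have hCr_fin : Cr.Finite := by
    refine Set.Finite.subset
      (ENNReal.finite_const_le_of_tsum_ne_top (a := fun e : T.edgeSet => edgeLen (e : Sym2 M))
        hfin.ne hpos.ne') ?_
    rintro ⟨e, he⟩ ⟨u, v, heq, hu, hv⟩
    have hlen : edgeLen ((⟨e, he⟩ : T.edgeSet) : Sym2 M) = edist u v := by
      show edgeLen e = edist u v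
      rw [show e = s(u, v) from heq]; rfl
    simpa only [Set.mem_setOf_eq, hlen] using hd_le hu hv
  have hCr_ne : Cr.Nonempty := by
    obtain ⟨a₁, ha₁⟩ := h₁
    obtain ⟨b₁, hb₁⟩ := h₂
    obtain ⟨w⟩ := htree.isConnected.preconnected a₁ b₁
    obtain ⟨u, v, hu, hv, hmem⟩ := exists_cross_edge hdisj hunion w ha₁ hb₁
    exact ⟨⟨s(u, v), w.edges_subset_edgeSet hmem⟩, u, v, rfl, hu, hv⟩
  obtain ⟨e₀, ⟨u₀, v₀, he₀, hu₀, hv₀⟩, hmin₀⟩ :=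
    Set.exists_min_image Cr (fun e => edgeLen (e : Sym2 M)) hCr_fin hCr_ne
  set m := edgeLen (e₀ : Sym2 M) with hm
  have hm_uv : m = edist u₀ v₀ := by rw [hm, he₀]; rfl
  have hdm : d < m := by
    rw [hm_uv]
    exact (hd_le hu₀ hv₀).lt_of_ne (Ne.symm (hno u₀ hu₀ v₀ hv₀))
  -- a pair closer than m
  have : ∃ a ∈ M₁, ∃ b ∈ M₂, edist a b < m := by
    have := hdm
    rw [hd] at this
    simp only [setDist, iInf_lt_iff] at this
    obtain ⟨a, ha, b, hb, hab⟩ := this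
    exact ⟨a, ha, b, hb, hab⟩
  obtain ⟨a, ha, b, hb, hab⟩ := this
  have hne_ab : a ≠ b := fun hq => Set.disjoint_left.mp hdisj ha (hq ▸ hb)
  -- the path from a to b in T
  obtain ⟨w₀⟩ := htree.isConnected.preconnected a b
  set p : T.Walk a b := (w₀.toPath : T.Walk a b) with hp_def
  have hp : p.IsPath := w₀.toPath.2
  obtain ⟨u', v', hu', hv', hmem'⟩ := exists_cross_edge hdisj hunion p ha hb
  have he'T : s(u', v') ∈ T.edgeSet := p.edges_subset_edgeSet hmem'
  have hm_le : m ≤ edist u' v' :=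
    hmin₀ ⟨s(u', v'), he'T⟩ ⟨u', v', rfl, hu', hv'⟩
  set D : SimpleGraph M := T \ fromEdgeSet {s(u', v')} with hD
  have hDe : D.edgeSet = T.edgeSet \ {s(u', v')} := by
    rw [hD, edgeSet_sdiff, edgeSet_fromEdgeSet, edgeSet_sdiff_sdiff_isDiag]
  -- a and b are not reachable in D
  have hnreach : ¬ D.Reachable a b := by
    rintro ⟨q⟩
    have hq_edges : ∀ e ∈ q.edges, e ∈ T.edgeSet := by
      intro e he
      have := q.edges_subset_edgeSet he
      rw [hDe] at this
      exact this.1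
    have hq_ne : s(u', v') ∉ q.edges := by
      intro hc
      have := q.edges_subset_edgeSet hc
      rw [hDe] at this
      exact this.2 rfl
    set q' : T.Walk a b := q.transfer T hq_edges with hq'
    have hq'_edges : q'.edges = q.edges := q.edges_transfer hq_edges
    have hpaths : (⟨p, hp⟩ : T.Path a b) = q'.toPath :=
      htree.IsAcyclic.path_unique _ _
    have hpq : p = (q'.toPath : T.Walk a b) := congrArg Subtype.val hpaths
    have hmem2 : s(u', v') ∈ (q'.toPath : T.Walk a b).edges := hpq ▸ hmem'
    have hmem3 : s(u', v') ∈ q'.edges := q'.edges_toPath_subset hmem2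
    rw [hq'_edges] at hmem3
    exact hq_ne hmem3
  -- sides
  have hK := reach_cases u' v' (G := T) p
  rw [← hD] at hK
  have hABside : (D.Reachable a u' ∧ D.Reachable v' b) ∨
      (D.Reachable a v' ∧ D.Reachable u' b) := by
    rcases hK with h1 | h2 | h3
    · exact absurd h1 hnreach
    · exact Or.inl h2
    · exact Or.inr h3
  -- the new graph
  set T' : SimpleGraph M := D ⊔ fromEdgeSet {s(a, b)} with hT'
  have hab_adj : T'.Adj a b := by
    rw [hT', sup_adj, fromEdgeSet_adj]
    exact Or.inr ⟨rfl, hne_ab⟩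
  have hDleT' : D ≤ T' := le_sup_left
  have huv'reach : T'.Reachable u' v' := by
    rcases hABside with ⟨h1, h2⟩ | ⟨h1, h2⟩
    · exact ((h1.mono hDleT').symm).trans (hab_adj.reachable.trans ((h2.mono hDleT').symm))
    · exact (h2.mono hDleT').trans ((hab_adj.reachable.symm).trans (h1.mono hDleT'))
  have hT'e : T'.edgeSet = (T.edgeSet \ {s(u', v')}) ∪ {s(a, b)} := by
    rw [hT', edgeSet_sup, hDe, edgeSet_fromEdgeSet]
    congr 1
    ext e
    simp only [Set.mem_diff, Set.mem_singleton_iff, Set.mem_setOf_eq, and_iff_left_iff_imp]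
    rintro rfl
    exact fun hdiag => hne_ab (Sym2.mk_isDiag_iff.mp hdiag)
  -- T' is connected
  have hT'conn : T'.Connected := by
    haveI : Nonempty M := ⟨a⟩
    refine SimpleGraph.Connected.mk fun x y => ?_
    obtain ⟨w⟩ := htree.isConnected.preconnected x y
    refine reach_of_walk ?_ w
    intro x' y' hadj
    by_cases he : s(x', y') = s(u', v')
    · rw [Sym2.eq_iff] at he
      rcases he with ⟨hx, hy⟩ | ⟨hx, hy⟩
      · subst hx; subst hy; exact huv'reach
      · subst hx; subst hy; exact huv'reach.symm
    · have : D.Adj x' y' := by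
        rw [hD, sdiff_adj, fromEdgeSet_adj]
        exact ⟨hadj, fun hc => he (Set.mem_singleton_iff.mp hc.1)⟩
      exact (hDleT' this).reachable
  -- T' is acyclic
  have hT'ac : T'.IsAcyclic := by
    intro w c hc
    by_cases hab_mem : s(a, b) ∈ c.edges
    · have := (adj_and_reachable_delete_edges_iff_exists_cycle (G := T')).mpr ⟨w, c, hc, hab_mem⟩
      have hreach' := this.2
      have hle : T' \ fromEdgeSet {s(a, b)} ≤ D := by
        rw [← edgeSet_subset_edgeSet]
        rw [edgeSet_sdiff, edgeSet_fromEdgeSet, edgeSet_sdiff_sdiff_isDiag, hT'e, hDe]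
        intro e he
        rcases he.1 with h1 | h2
        · exact h1
        · exact absurd h2 he.2
      exact hnreach (hreach'.mono hle)
    · have hce : ∀ e ∈ c.edges, e ∈ T.edgeSet := by
        intro e he
        have := c.edges_subset_edgeSet he
        rw [hT'e] at this
        rcases this with h1 | h2
        · exact h1.1
        · rw [Set.mem_singleton_iff] at h2
          exact absurd (h2 ▸ he) hab_mem
      exact htree.IsAcyclic (c.transfer T hce) (hc.transfer hce)
  -- length comparison
  have hSdiff : graphLen T =
      (∑' e : ↑(T.edgeSet \ {s(u', v')}), edgeLen (e : Sym2 M)) + edist u' v' := by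
    have hset : T.edgeSet = (T.edgeSet \ {s(u', v')}) ∪ {s(u', v')} :=
      (Set.diff_union_of_subset (Set.singleton_subset_iff.mpr he'T)).symm
    have hdisj' : Disjoint (T.edgeSet \ {s(u', v')}) {s(u', v')} :=
      Set.disjoint_sdiff_left.mono_left le_rfl
    calc graphLen T = ∑' e : ↑((T.edgeSet \ {s(u', v')}) ∪ {s(u', v')}), edgeLen (e : Sym2 M) := by
          rw [graphLen]; exact tsum_congr_set_coe _ hset
    _ = (∑' e : ↑(T.edgeSet \ {s(u', v')}), edgeLen (e : Sym2 M)) +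
          ∑' e : ↑({s(u', v')} : Set (Sym2 M)), edgeLen (e : Sym2 M) :=
          Summable.tsum_union_disjoint hdisj' ENNReal.summable ENNReal.summable
    _ = (∑' e : ↑(T.edgeSet \ {s(u', v')}), edgeLen (e : Sym2 M)) + edist u' v' := by
          congr 1
          have : ∀ (e : ↑({s(u', v')} : Set (Sym2 M))), (e : Sym2 M) = s(u', v') :=
            fun e => e.2
          rw [tsum_eq_single (⟨s(u', v'), rfl⟩ : ↑({s(u', v')} : Set (Sym2 M)))]
          · rfl
          · intro b' hb'
            exact absurd (Subtype.ext (Set.mem_singleton_iff.mp b'.2)) hb'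
  have hSd_ne : (∑' e : ↑(T.edgeSet \ {s(u', v')}), edgeLen (e : Sym2 M)) ≠ ⊤ := by
    intro hc
    rw [hSdiff, hc] at hfin
    simp at hfin
  have hlen : graphLen T' < graphLen T := by
    have h1 : graphLen T' ≤
        (∑' e : ↑(T.edgeSet \ {s(u', v')}), edgeLen (e : Sym2 M)) + edist a b := by
      rw [graphLen]
      calc (∑' e : T'.edgeSet, edgeLen (e : Sym2 M))
          = ∑' e : ↑((T.edgeSet \ {s(u', v')}) ∪ {s(a, b)}), edgeLen (e : Sym2 M) :=
            tsum_congr_set_coe _ hT'e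
      _ ≤ (∑' e : ↑(T.edgeSet \ {s(u', v')}), edgeLen (e : Sym2 M)) +
            ∑' e : ↑({s(a, b)} : Set (Sym2 M)), edgeLen (e : Sym2 M) :=
            ENNReal.tsum_union_le _ _ _
      _ = (∑' e : ↑(T.edgeSet \ {s(u', v')}), edgeLen (e : Sym2 M)) + edist a b := by
            congr 1
            rw [tsum_eq_single (⟨s(a, b), rfl⟩ : ↑({s(a, b)} : Set (Sym2 M)))]
            · rfl
            · intro b' hb'
              exact absurd (Subtype.ext (Set.mem_singleton_iff.mp b'.2)) hb'
    have h2 : edist a b < edist u' v' := lt_of_lt_of_le hab hm_le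
    calc graphLen T' ≤ _ + edist a b := h1
    _ < _ + edist u' v' := ENNReal.add_lt_add_left hSd_ne h2
    _ = graphLen T := hSdiff.symm
  exact absurd (hmin T' ⟨hT'conn, hT'ac⟩) (not_le.mpr hlen)


end MSTPaper
end

section
/- Let T = (M, E) be a minimal spanning tree on a metric space (M, ρ), and let v ∈ M. Then v has infinite degree in T if and only if inf{ρ(v, w) : w ∈ M, w ≠ v} = 0. -/
open scoped ENNReal

namespace MSTPaper

variable {M : Type*}

private lemma tsum_set_eq_add {α : Type*} (f : α → ℝ≥0∞) {s : Set α} {a : α} (ha : a ∈ s) :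
    ∑' x : s, f x = f a + ∑' x : ↥(s \ {a}), f x := by
  have hdisj : Disjoint ({a} : Set α) (s \ {a}) :=
    Set.disjoint_left.mpr fun x hx hmem => hmem.2 hx
  have hs : s = {a} ∪ (s \ {a}) :=
    (Set.union_diff_cancel (Set.singleton_subset_iff.mpr ha)).symm
  have key : s.indicator f = fun x => ({a} : Set α).indicator f x + (s \ {a}).indicator f x := by
    conv_lhs => rw [hs]
    exact Set.indicator_union_of_disjoint hdisj f
  calc ∑' x : s, f x = ∑' x, s.indicator f x := tsum_subtype s f
    _ = ∑' x, (({a} : Set α).indicator f x + (s \ {a}).indicator f x) := by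
        rw [key]
    _ = (∑' x, ({a} : Set α).indicator f x) + ∑' x, (s \ {a}).indicator f x :=
        ENNReal.tsum_add
    _ = f a + ∑' x : ↥(s \ {a}), f x := by
        rw [← tsum_subtype, ← tsum_subtype, tsum_singleton]

private lemma reach_cases_s13 {G : SimpleGraph M} (a b : M) {x y : M} (p : G.Walk x y) :
    (G.deleteEdges {s(a,b)}).Reachable x y ∨
      ((G.deleteEdges {s(a,b)}).Reachable x a ∧ (G.deleteEdges {s(a,b)}).Reachable b y) ∨
      ((G.deleteEdges {s(a,b)}).Reachable x b ∧ (G.deleteEdges {s(a,b)}).Reachable a y) := by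
  induction p with
  | nil => exact Or.inl (SimpleGraph.Reachable.refl _)
  | @cons x c y h q ih =>
    by_cases he : s(x, c) = s(a, b)
    · rcases Sym2.eq_iff.mp he with ⟨rfl, rfl⟩ | ⟨rfl, rfl⟩
      · rcases ih with h1 | ⟨h1, h2⟩ | ⟨h1, h2⟩
        · exact Or.inr (Or.inl ⟨SimpleGraph.Reachable.refl _, h1⟩)
        · exact Or.inr (Or.inl ⟨SimpleGraph.Reachable.refl _, h2⟩)
        · exact Or.inl h2
      · rcases ih with h1 | ⟨h1, h2⟩ | ⟨h1, h2⟩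
        · exact Or.inr (Or.inr ⟨SimpleGraph.Reachable.refl _, h1⟩)
        · exact Or.inl h2
        · exact Or.inr (Or.inr ⟨SimpleGraph.Reachable.refl _, h2⟩)
    · have hadj : (G.deleteEdges {s(a,b)}).Adj x c := by
        rw [SimpleGraph.deleteEdges_adj]
        exact ⟨h, by simpa using he⟩
      rcases ih with h1 | ⟨h1, h2⟩ | ⟨h1, h2⟩
      · exact Or.inl (hadj.reachable.trans h1)
      · exact Or.inr (Or.inl ⟨hadj.reachable.trans h1, h2⟩)
      · exact Or.inr (Or.inr ⟨hadj.reachable.trans h1, h2⟩)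

/-- A vertex of a minimal spanning tree has infinite degree iff the infimum of
distances from it to the other points is zero. -/
theorem mst_infinite_degree_iff [MetricSpace M] (T : SimpleGraph M) (hT : IsMST T)
    (v : M) :
    (T.incidenceSet v).Infinite ↔ (⨅ (w : M) (_ : w ≠ v), edist v w) = 0 := by
  constructor
  · -- infinite degree → infimum is zero
    intro hinf
    by_contra hc
    set c : ℝ≥0∞ := ⨅ (w : M) (_ : w ≠ v), edist v w with hcdef
    have key : ∀ x y : M, s(x, y) ∈ T.incidenceSet v → c ≤ edgeLen s(x, y) := by
        rintro x y ⟨hedge, hv⟩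
        have hxy : x ≠ y := fun h =>
          T.not_isDiag_of_mem_edgeSet hedge (Sym2.mk_isDiag_iff.mpr h)
        rw [Sym2.mem_iff] at hv
        rcases hv with rfl | rfl
        · have hlen : edgeLen s(v, y) = edist v y := rfl
          rw [hlen]
          exact iInf_le_of_le y (iInf_le _ (Ne.symm hxy))
        · have hlen : edgeLen s(x, v) = edist v x := by
            simp [edgeLen, edist_comm]
          rw [hlen]
          exact iInf_le_of_le x (iInf_le _ hxy)
    have hle : ∀ e ∈ T.incidenceSet v, c ≤ edgeLen e := fun e => Sym2.ind key e
    haveI : Infinite ↥(T.incidenceSet v) := hinf.to_subtype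
    have htop : (⊤ : ℝ≥0∞) ≤ graphLen T := by
      calc (⊤ : ℝ≥0∞) = ∑' _ : ↥(T.incidenceSet v), c :=
            (ENNReal.tsum_const_eq_top_of_ne_zero hc).symm
        _ ≤ ∑' e : ↥(T.incidenceSet v), edgeLen (e : Sym2 M) :=
            ENNReal.tsum_le_tsum fun e => hle e e.2
        _ = ∑' e : ↥(T.incidenceSet v),
              edgeLen ((Set.inclusion (T.incidenceSet_subset v) e : T.edgeSet) : Sym2 M) := rfl
        _ ≤ ∑' e : T.edgeSet, edgeLen (e : Sym2 M) :=
            ENNReal.tsum_comp_le_tsum_of_injective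
              (Set.inclusion_injective (T.incidenceSet_subset v)) _
        _ = graphLen T := rfl
    exact absurd (top_le_iff.mp htop) hT.2.1.ne
  · -- infimum zero → infinite degree
    intro h0
    classical
    by_contra hfin'
    rw [Set.not_infinite] at hfin'
    -- the neighbor set is finite
    have hnbfin : (T.neighborSet v).Finite := by
      apply Set.Finite.of_finite_image (f := fun u => s(v, u))
      · refine hfin'.subset ?_
        rintro e ⟨u, hu, rfl⟩
        exact ⟨T.mem_edgeSet.mpr hu, Sym2.mem_mk_left v u⟩
      · intro a _ b _ hab
        exact Sym2.congr_right.mp hab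
    rcases Set.eq_empty_or_nonempty (T.neighborSet v) with hempty | hne
    · -- no neighbors: every point equals v, so the infimum is ⊤
      have hall : ∀ w : M, ¬ w ≠ v := by
        intro w hw
        obtain ⟨p⟩ := hT.1.isConnected.preconnected v w
        obtain ⟨u, hadj, q, rfl⟩ := SimpleGraph.Walk.exists_eq_cons_of_ne (Ne.symm hw) p
        exact Set.eq_empty_iff_forall_notMem.mp hempty u hadj
      have : (⨅ (w : M) (_ : w ≠ v), edist v w) = ⊤ := by
        simp [iInf_eq_top]
        intro w
        exact not_not.mp (hall w)
      rw [this] at h0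
      exact ENNReal.top_ne_zero h0
    · -- finite positive degree: swap argument
      set s : Finset M := hnbfin.toFinset with hsdef
      have hsne : s.Nonempty := by
        obtain ⟨u, hu⟩ := hne
        exact ⟨u, hnbfin.mem_toFinset.mpr hu⟩
      set ε : ℝ≥0∞ := s.inf' hsne (fun u => edist v u) with hεdef
      have hεpos : 0 < ε := by
        rw [hεdef, Finset.lt_inf'_iff]
        intro u hu
        exact edist_pos.mpr (hnbfin.mem_toFinset.mp hu).ne
      -- find a point w ≠ v closer than ε
      have hltε : (⨅ (w : M) (_ : w ≠ v), edist v w) < ε := h0 ▸ hεpos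
      rw [iInf_lt_iff] at hltε
      obtain ⟨w, hw⟩ := hltε
      rw [iInf_lt_iff] at hw
      obtain ⟨hwv, hw⟩ := hw
      have hvw : v ≠ w := Ne.symm hwv
      -- the first edge on the path from v to w
      obtain ⟨p0⟩ := hT.1.isConnected.preconnected v w
      have hp0 : (p0.toPath : T.Walk v w).IsPath := p0.toPath.2
      obtain ⟨u, hadj, q, hq⟩ :=
        SimpleGraph.Walk.exists_eq_cons_of_ne hvw (p0.toPath : T.Walk v w)
      rw [hq, SimpleGraph.Walk.cons_isPath_iff] at hp0
      obtain ⟨hqpath, hvq⟩ := hp0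
      have hnotin : s(v, u) ∉ q.edges := fun h =>
        hvq (SimpleGraph.Walk.fst_mem_support_of_mem_edges q h)
      -- u is a neighbor, so its edge is long; w is not a neighbor
      have hεle : ε ≤ edist v u := Finset.inf'_le _ (hnbfin.mem_toFinset.mpr hadj)
      have hwu : edist v w < edist v u := lt_of_lt_of_le hw hεle
      have hwnb : s(v, w) ∉ T.edgeSet := by
        intro h
        have : ε ≤ edist v w :=
          Finset.inf'_le _ (hnbfin.mem_toFinset.mpr (T.mem_edgeSet.mp h))
        exact absurd hw (not_lt_of_ge this)
      -- delete the edge s(v,u), add the edge s(v,w)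
      set E : SimpleGraph M := T.deleteEdges {s(v, u)} with hEdef
      set T' : SimpleGraph M := E ⊔ SimpleGraph.fromEdgeSet {s(v, w)} with hT'def
      have hEleT' : E ≤ T' := le_sup_left
      have Ruw : E.Reachable u w :=
        ⟨q.toDeleteEdges {s(v, u)} (by
          intro e he hmem
          rw [Set.mem_singleton_iff] at hmem
          exact hnotin (hmem ▸ he))⟩
      have hRvu : ¬ E.Reachable v u := by
        have hbridge : T.IsBridge s(v, u) :=
          (SimpleGraph.isAcyclic_iff_forall_edge_isBridge.mp hT.1.IsAcyclic)
            (T.mem_edgeSet.mpr hadj)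
        exact SimpleGraph.isBridge_iff.mp hbridge
      have hRvw : ¬ E.Reachable v w := fun h => hRvu (h.trans Ruw.symm)
      have hAdjvw : T'.Adj v w := by
        rw [hT'def, SimpleGraph.sup_adj]
        exact Or.inr ((SimpleGraph.fromEdgeSet_adj _).mpr ⟨Set.mem_singleton _, hvw⟩)
      -- T' is connected
      have hreach : ∀ x : M, T'.Reachable v x := by
        intro x
        obtain ⟨p⟩ := hT.1.isConnected.preconnected v x
        rcases reach_cases_s13 v u p with h1 | ⟨h1, h2⟩ | ⟨h1, h2⟩
        · exact h1.mono hEleT'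
        · exact hAdjvw.reachable.trans ((Ruw.symm.trans h2).mono hEleT')
        · exact h2.mono hEleT'
      have hconn' : T'.Connected :=
        (SimpleGraph.connected_iff _).mpr ⟨fun x y => (hreach x).symm.trans (hreach y), ⟨v⟩⟩
      -- s(v,w) is a bridge of T'
      have hsub : T' \ SimpleGraph.fromEdgeSet {s(v, w)} ≤ E := by
        intro a b hab
        rw [SimpleGraph.sdiff_adj] at hab
        obtain ⟨h1, h2⟩ := hab
        rcases (SimpleGraph.sup_adj _ _ _ _).mp h1 with h3 | h3
        · exact h3
        · exact absurd h3 h2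
      have hbridge' : T'.IsBridge s(v, w) :=
        SimpleGraph.isBridge_iff.mpr (fun h => hRvw (h.mono hsub))
      -- T' is acyclic
      have hacyc : T'.IsAcyclic := by
        intro z c hc
        have hnotc : s(v, w) ∉ c.edges :=
          hbridge'.notMem_edges_of_isCycle hc
        have hTedges : ∀ e ∈ c.edges, e ∈ T.edgeSet := by
          intro e he
          have hmem := c.edges_subset_edgeSet he
          rw [hT'def, SimpleGraph.edgeSet_sup, hEdef, SimpleGraph.edgeSet_deleteEdges,
            SimpleGraph.edgeSet_fromEdgeSet] at hmem
          rcases hmem with h1 | h1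
          · exact h1.1
          · exact absurd (h1.1 ▸ he) hnotc
        exact hT.1.IsAcyclic (c.transfer T hTedges) (hc.transfer hTedges)
      have htree' : T'.IsTree := ⟨hconn', hacyc⟩
      -- T' is strictly shorter than T
      have hEedge : T'.edgeSet = (T.edgeSet \ {s(v, u)}) ∪ {s(v, w)} := by
        rw [hT'def, SimpleGraph.edgeSet_sup, hEdef, SimpleGraph.edgeSet_deleteEdges,
          SimpleGraph.edgeSet_fromEdgeSet]
        congr 1
        ext e
        simp only [Set.mem_diff, Set.mem_singleton_iff, Set.mem_setOf_eq]
        constructor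
        · exact fun h => h.1
        · rintro rfl
          exact ⟨rfl, by simpa using hvw⟩
      set S : ℝ≥0∞ := ∑' x : ↥(T.edgeSet \ {s(v, u)}), edgeLen (x : Sym2 M) with hSdef
      have hTlen : graphLen T = edist v u + S := by
        have := tsum_set_eq_add (edgeLen (M := M)) (T.mem_edgeSet.mpr hadj)
        simpa [graphLen, edgeLen, hSdef] using this
      have hT'len : graphLen T' = edist v w + S := by
        have hmem : s(v, w) ∈ T'.edgeSet := hAdjvw
        have := tsum_set_eq_add (edgeLen (M := M)) hmem
        have hset : T'.edgeSet \ {s(v, w)} = T.edgeSet \ {s(v, u)} := by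
          rw [hEedge, Set.union_diff_right, Set.diff_diff_comm,
            Set.diff_singleton_eq_self hwnb]
        rw [hset] at this
        simpa [graphLen, edgeLen, hSdef] using this
      have hSne : S ≠ ⊤ := by
        intro h
        apply hT.2.1.ne
        rw [hTlen, h, add_top]
      have hlt : graphLen T' < graphLen T := by
        rw [hTlen, hT'len]
        exact ENNReal.add_lt_add_right hSne hwu
      exact hlt.not_ge (hT.2.2 T' htree')

end MSTPaper
end

section
/- Let T = (M, E, ω) be a weighted tree with positive weight function ω and finite total weight ω(T) = Σ_{e∈E} ω(e) < ∞. Define ρ^T_1(v,w) as the sum of ω(e) over edges e of the path T[v,w], and ρ^T_∞(v,w) as the maximum of ω(e) over these edges. Then ρ^T_1 is a metric on M and T is a minimal spanning tree on (M, ρ^T_1). In particular, every tree with at most countably many edges is isomorphic to a minimal spanning tree of some metric space. -/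
universe u v

open scoped ENNReal NNReal

namespace MSTPaper

variable {M : Type*}

section Aux
variable (T : SimpleGraph M) (hT : T.IsTree) (ω : Sym2 M → ℝ)

noncomputable def thePath (v w : M) : T.Walk v w :=
  (hT.existsUnique_path v w).exists.choose

lemma thePath_isPath (v w : M) : (thePath T hT v w).IsPath :=
  (hT.existsUnique_path v w).exists.choose_spec

lemma path_eq_thePath {v w : M} (p : T.Walk v w) (hp : p.IsPath) :
    p = thePath T hT v w :=
  (hT.existsUnique_path v w).unique hp (thePath_isPath T hT v w)

noncomputable def W (e : Sym2 M) : ℝ≥0 := (ω e).toNNReal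

noncomputable def wsum {v w : M} (p : T.Walk v w) : ℝ≥0 :=
  (p.edges.map (W ω)).sum

noncomputable def td (v w : M) : ℝ≥0 := wsum T ω (thePath T hT v w)

lemma list_sum_le {α : Type*} [DecidableEq α] (f : α → ℝ≥0) {l l' : List α}
    (h : l.Nodup) (hs : l ⊆ l') : (l.map f).sum ≤ (l'.map f).sum := by
  have hle : (l : Multiset α) ≤ (l' : Multiset α) := by
    rw [Multiset.le_iff_count]
    intro a
    simp only [Multiset.coe_count]
    by_cases ha : a ∈ l
    · rw [List.count_eq_one_of_mem h ha]
      exact List.count_pos_iff.mpr (hs ha)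
    · simp [List.count_eq_zero_of_not_mem ha]
  obtain ⟨u, hu⟩ := Multiset.le_iff_exists_add.mp hle
  have h1 : (l.map f).sum = ((l : Multiset α).map f).sum := by
    simp [Multiset.sum_coe]
  have h2 : (l'.map f).sum = ((l' : Multiset α).map f).sum := by
    simp [Multiset.sum_coe]
  rw [h1, h2, hu, Multiset.map_add, Multiset.sum_add]
  exact le_self_add

variable {T}

lemma wsum_le_of_walk {v w : M} (p : T.Walk v w) :
    wsum T ω (thePath T hT v w) ≤ wsum T ω p := by
  classical
  have hb : p.bypass = thePath T hT v w := path_eq_thePath T hT _ p.bypass_isPath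
  rw [← hb]
  exact list_sum_le _ p.bypass_isPath.isTrail.edges_nodup
    (fun e he => p.edges_bypass_subset he)

lemma td_self (v : M) : td T hT ω v v = 0 := by
  have : (SimpleGraph.Walk.nil : T.Walk v v) = thePath T hT v v :=
    path_eq_thePath T hT _ (by simp)
  simp [td, wsum, ← this]

lemma td_comm (v w : M) : td T hT ω v w = td T hT ω w v := by
  have : (thePath T hT v w).reverse = thePath T hT w v :=
    path_eq_thePath T hT _ (thePath_isPath T hT v w).reverse
  unfold td wsum
  rw [← this, SimpleGraph.Walk.edges_reverse, List.map_reverse, List.sum_reverse]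

lemma td_triangle (v w u : M) : td T hT ω v u ≤ td T hT ω v w + td T hT ω w u := by
  have h := wsum_le_of_walk hT ω ((thePath T hT v w).append (thePath T hT w u))
  simp only [wsum, SimpleGraph.Walk.edges_append, List.map_append, List.sum_append] at h
  exact h

lemma td_pos (hpos : ∀ e ∈ T.edgeSet, 0 < ω e) {v w : M} (hvw : v ≠ w) :
    0 < td T hT ω v w := by
  set p := thePath T hT v w with hp
  have hlen : p.length ≠ 0 := fun h => hvw (SimpleGraph.Walk.eq_of_length_eq_zero h)
  have hedges : p.edges ≠ [] := by
    intro h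
    apply hlen
    have := p.length_edges
    rw [h] at this
    simpa using this.symm
  obtain ⟨e, he⟩ := List.exists_mem_of_ne_nil _ hedges
  have heE : e ∈ T.edgeSet := p.edges_subset_edgeSet he
  have hWe : 0 < W ω e := by
    simp only [W, Real.toNNReal_pos]
    exact hpos e heE
  calc (0 : ℝ≥0) < W ω e := hWe
    _ ≤ (p.edges.map (W ω)).sum :=
      List.single_le_sum (fun x _ => zero_le) _ (List.mem_map_of_mem he)

/-- The path metric on the vertex set of a weighted tree. -/
noncomputable def treeMetric (hpos : ∀ e ∈ T.edgeSet, 0 < ω e) : MetricSpace M where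
  dist v w := td T hT ω v w
  dist_self v := by
    show (td T hT ω v v : ℝ) = 0
    rw [td_self]; simp
  dist_comm v w := by
    show (td T hT ω v w : ℝ) = (td T hT ω w v : ℝ)
    rw [td_comm]
  dist_triangle v w u := by
    show (td T hT ω v u : ℝ) ≤ (td T hT ω v w : ℝ) + (td T hT ω w u : ℝ)
    exact_mod_cast td_triangle hT ω v w u
  eq_of_dist_eq_zero {v w} h := by
    by_contra hvw
    have hp := td_pos hT ω hpos hvw
    have h' : (td T hT ω v w : ℝ) = 0 := h
    have : td T hT ω v w = 0 := by exact_mod_cast h'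
    rw [this] at hp
    exact lt_irrefl _ hp
  edist v w := (td T hT ω v w : ℝ≥0∞)
  edist_dist v w := by simp [ENNReal.ofReal_coe_nnreal]


lemma treeMetric_edist (hpos : ∀ e ∈ T.edgeSet, 0 < ω e) (v w : M) :
    @edist M (treeMetric hT ω hpos).toEDist v w = (td T hT ω v w : ℝ≥0∞) := rfl

/-- edge set of the tree path, as a Finset, for ordered pair -/
noncomputable def Fuv (v w : M) : Finset (Sym2 M) :=
  @List.toFinset _ (Classical.decEq _) (thePath T hT v w).edges

lemma Fuv_symm (v w : M) : Fuv hT v w = Fuv hT w v := by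
  have : (thePath T hT v w).reverse = thePath T hT w v :=
    path_eq_thePath T hT _ (thePath_isPath T hT v w).reverse
  unfold Fuv
  rw [← this, SimpleGraph.Walk.edges_reverse, @List.toFinset_reverse _ (Classical.decEq _)]

lemma td_eq_finset_sum (v w : M) :
    td T hT ω v w = (Fuv hT v w).sum (W ω) := by
  unfold td wsum Fuv
  exact (@List.sum_toFinset _ _ (Classical.decEq _) _ (W ω) _ (thePath_isPath T hT v w).isTrail.edges_nodup).symm

/-- For an edge of the tree, the unique path is the single edge. -/
lemma thePath_singleton {v w : M} (h : T.Adj v w) :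
    thePath T hT v w = SimpleGraph.Walk.cons h SimpleGraph.Walk.nil :=
  (path_eq_thePath T hT _ (SimpleGraph.Path.singleton h).2).symm

lemma td_of_adj {v w : M} (h : T.Adj v w) : td T hT ω v w = W ω s(v, w) := by
  rw [td, thePath_singleton hT h]
  simp [wsum]

/-- Crossing lemma: a walk from inside A to outside A has an edge crossing A. -/
lemma exists_crossing {G : SimpleGraph M} {A : Set M} :
    ∀ {a b : M} (_ : G.Walk a b), a ∈ A → b ∉ A →
      ∃ x y, G.Adj x y ∧ x ∈ A ∧ y ∉ A := by
  intro a b p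
  induction p with
  | nil => intro h h'; exact absurd h h'
  | @cons a c b h q ih =>
    intro ha hb
    by_cases hc : c ∈ A
    · exact ih hc hb
    · exact ⟨a, c, h, ha, hc⟩

/-- Covering lemma: every tree edge lies on the tree path of some edge of any
connected graph. -/
lemma covering (hT : T.IsTree) {T' : SimpleGraph M} (hT' : T'.Connected)
    {e : Sym2 M} (he : e ∈ T.edgeSet) :
    ∃ x y, T'.Adj x y ∧ e ∈ (thePath T hT x y).edges := by
  induction e with
  | _ a b =>
    have hadj : T.Adj a b := he
    have hbridge : T.IsBridge s(a, b) :=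
      SimpleGraph.isAcyclic_iff_forall_edge_isBridge.mp hT.2 he
    have hnr : ¬(T \ SimpleGraph.fromEdgeSet {s(a, b)}).Reachable a b :=
      (SimpleGraph.isBridge_iff.mp hbridge)
    set A : Set M := {x | (T \ SimpleGraph.fromEdgeSet {s(a, b)}).Reachable a x} with hA
    have haA : a ∈ A := SimpleGraph.Reachable.refl a
    have hbA : b ∉ A := hnr
    obtain ⟨p⟩ := hT'.preconnected a b
    obtain ⟨x, y, hxy, hx, hy⟩ := exists_crossing p haA hbA
    refine ⟨x, y, hxy, ?_⟩
    by_contra hmem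
    apply hy
    have hall : ∀ f ∈ (thePath T hT x y).edges, f ∉ ({s(a, b)} : Set (Sym2 M)) := by
      intro f hf hfs
      rw [Set.mem_singleton_iff] at hfs
      exact hmem (hfs ▸ hf)
    have q := (thePath T hT x y).toDeleteEdges {s(a, b)} hall
    exact hx.trans ⟨q⟩

end Aux

theorem main {α : Type*} (T : SimpleGraph α) (hT : T.IsTree)
    (ω : Sym2 α → ℝ) (hpos : ∀ e ∈ T.edgeSet, 0 < ω e)
    (hsum : Summable fun e : T.edgeSet => ω (e : Sym2 α)) :
    ∃ inst : MetricSpace α,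
      (∀ v w : α, ∀ p : T.Path v w, @dist α inst.toDist v w = (p.1.edges.map ω).sum) ∧
      @IsMST α inst T := by
  classical
  refine ⟨treeMetric hT ω hpos, ?_, hT, ?_, ?_⟩
  · -- dist formula
    intro v w p
    show (td T hT ω v w : ℝ) = (p.1.edges.map ω).sum
    rw [td, ← path_eq_thePath T hT p.1 p.2]
    show ((p.1.edges.map (W ω)).sum : ℝ) = (p.1.edges.map ω).sum
    rw [NNReal.coe_list_sum, List.map_map]
    congr 1
    apply List.map_congr_left
    intro e he
    exact Real.coe_toNNReal _ (le_of_lt (hpos e (p.1.edges_subset_edgeSet he)))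
  · -- finiteness
    have hEL : ∀ (e : Sym2 α), e ∈ T.edgeSet →
        @edgeLen α (treeMetric hT ω hpos) e = (W ω e : ℝ≥0∞) := by
      intro e
      induction e with
      | _ u v =>
        intro he
        show (↑(td T hT ω u v) : ℝ≥0∞) = _
        rw [td_of_adj hT ω he]
    have hgl : @graphLen α (treeMetric hT ω hpos) T
        = ∑' e : T.edgeSet, (W ω (e : Sym2 α) : ℝ≥0∞) :=
      tsum_congr fun e => hEL e e.2
    rw [hgl, lt_top_iff_ne_top, ENNReal.tsum_coe_ne_top_iff_summable]
    rw [← NNReal.summable_coe]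
    apply hsum.congr
    intro e
    exact (Real.coe_toNNReal _ (le_of_lt (hpos e e.2))).symm
  · -- minimality
    intro T' hT'
    letI inst := treeMetric hT ω hpos
    set F : Sym2 α → Finset (Sym2 α) := Sym2.lift ⟨Fuv hT, Fuv_symm hT⟩ with hF
    have hEL2 : ∀ e : Sym2 α, @edgeLen α inst e = ∑ f ∈ F e, (W ω f : ℝ≥0∞) := by
      intro e
      induction e with
      | _ u v =>
        show (↑(td T hT ω u v) : ℝ≥0∞) = ∑ f ∈ Fuv hT u v, (W ω f : ℝ≥0∞)
        rw [td_eq_finset_sum hT ω, ENNReal.coe_finset_sum]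
    have hcov : ∀ f ∈ T.edgeSet, ∃ e' : T'.edgeSet, f ∈ F (e' : Sym2 α) := by
      intro f hf
      obtain ⟨x, y, hxy, hmem⟩ := covering hT hT'.isConnected hf
      refine ⟨⟨s(x, y), hxy⟩, ?_⟩
      show f ∈ Fuv hT x y
      exact (@List.mem_toFinset _ (Classical.decEq _) _ _).mpr hmem
    have hEL1 : ∀ (e : Sym2 α), e ∈ T.edgeSet →
        @edgeLen α inst e = (W ω e : ℝ≥0∞) := by
      intro e
      induction e with
      | _ u v =>
        intro he
        show (↑(td T hT ω u v) : ℝ≥0∞) = _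
        rw [td_of_adj hT ω he]
    calc @graphLen α inst T = ∑' f : T.edgeSet, (W ω (f : Sym2 α) : ℝ≥0∞) :=
          tsum_congr fun f => hEL1 f f.2
      _ = ∑' f : Sym2 α, Set.indicator T.edgeSet (fun g => (W ω g : ℝ≥0∞)) f :=
          tsum_subtype T.edgeSet (fun g => (W ω g : ℝ≥0∞))
      _ ≤ ∑' f : Sym2 α, ∑' e' : T'.edgeSet,
            (if f ∈ F (e' : Sym2 α) then (W ω f : ℝ≥0∞) else 0) := by
          apply ENNReal.tsum_le_tsum
          intro f
          by_cases hf : f ∈ T.edgeSet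
          · rw [Set.indicator_of_mem hf]
            obtain ⟨e', he'⟩ := hcov f hf
            calc (W ω f : ℝ≥0∞) = (if f ∈ F (e' : Sym2 α) then (W ω f : ℝ≥0∞) else 0) := by
                  rw [if_pos he']
              _ ≤ _ := ENNReal.le_tsum e'
          · rw [Set.indicator_of_notMem hf]
            exact zero_le
      _ = ∑' e' : T'.edgeSet, ∑' f : Sym2 α,
            (if f ∈ F (e' : Sym2 α) then (W ω f : ℝ≥0∞) else 0) := ENNReal.tsum_comm
      _ = ∑' e' : T'.edgeSet, @edgeLen α inst (e' : Sym2 α) := by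
          apply tsum_congr
          intro e'
          rw [hEL2]
          rw [tsum_eq_sum (s := F (e' : Sym2 α)) (fun b hb => if_neg hb)]
          exact Finset.sum_congr rfl fun f hf => if_pos hf
      _ = @graphLen α inst T' := rfl

/-- For a weighted tree `T` with positive weights and finite total weight, the path
metric `ρ^T_1` is a metric on the vertex set for which `T` is a minimal spanning
tree; in particular, every tree with at most countably many edges is isomorphic to
a minimal spanning tree of some metric space. -/
theorem weighted_tree_is_mst {M : Type u} (T : SimpleGraph M) (hT : T.IsTree)
    (ω : Sym2 M → ℝ) (hpos : ∀ e ∈ T.edgeSet, 0 < ω e)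
    (hsum : Summable fun e : T.edgeSet => ω (e : Sym2 M)) :
    (∃ inst : MetricSpace M,
        (∀ v w : M, ∀ p : T.Path v w, @dist M inst.toDist v w = (p.1.edges.map ω).sum) ∧
        @IsMST M inst T) ∧
    (∀ (V : Type v) (S : SimpleGraph V), S.IsTree → S.edgeSet.Countable →
        ∃ (inst : MetricSpace V) (S' : SimpleGraph V),
          @IsMST V inst S' ∧ Nonempty (S ≃g S')) := by
  refine ⟨main T hT ω hpos hsum, ?_⟩
  intro V S hS hcnt
  haveI := hcnt.to_subtype
  obtain ⟨f, hf⟩ := Countable.exists_injective_nat ↥S.edgeSet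
  classical
  set ω' : Sym2 V → ℝ := fun e => if h : e ∈ S.edgeSet then ((1:ℝ)/2)^(f ⟨e, h⟩) else 1
    with hω'
  have hpos' : ∀ e ∈ S.edgeSet, 0 < ω' e := by
    intro e he
    simp only [hω', dif_pos he]
    positivity
  have hsum' : Summable fun e : S.edgeSet => ω' (e : Sym2 V) := by
    apply (summable_geometric_two.comp_injective hf).congr
    intro e
    simp [hω', Function.comp, e.2]
  obtain ⟨inst, _, hmst⟩ := main S hS ω' hpos' hsum'
  exact ⟨inst, S, hmst, ⟨SimpleGraph.Iso.refl⟩⟩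


end MSTPaper
end

section
/- Let T = (M, E) be a tree, ρ a metric on M, and f ∈ E an exact edge. Let e ∈ E with e ≠ f, let {M₁, M₂} be the partition of M induced by removing e, and suppose ρ(M₁, M₂) = ρ(m₁, m₂) for some m₁ ∈ M₁, m₂ ∈ M₂. Then f is also an exact edge of the tree S = T[e → m₁m₂] obtained from T by deleting e and adding the edge m₁m₂. -/
open scoped ENNReal

namespace MSTPaper

variable {M : Type*}

lemma setDist_le [MetricSpace M] {A B : Set M} {x y : M} (hx : x ∈ A) (hy : y ∈ B) :
    setDist A B ≤ edist x y :=
  le_trans (iInf₂_le x hx) (iInf₂_le y hy)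

lemma le_setDist [MetricSpace M] {A B : Set M} {r : ℝ≥0∞}
    (h : ∀ x ∈ A, ∀ y ∈ B, r ≤ edist x y) : r ≤ setDist A B :=
  le_iInf₂ fun x hx => le_iInf₂ fun y hy => h x hx y hy

lemma reach_del (G : SimpleGraph M) (u v : M) :
    ∀ {x y : M}, G.Reachable x y →
      ((G.deleteEdges {s(u,v)}).Reachable u x ∨ (G.deleteEdges {s(u,v)}).Reachable v x) →
      ((G.deleteEdges {s(u,v)}).Reachable u y ∨ (G.deleteEdges {s(u,v)}).Reachable v y) := by
  intro x y hxy
  obtain ⟨p⟩ := hxy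
  induction p with
  | nil => exact id
  | @cons x' z y' h q ih =>
    intro hx
    apply ih
    by_cases hedge : s(x', z) = s(u, v)
    · rcases Sym2.eq_iff.mp hedge with ⟨rfl, rfl⟩ | ⟨rfl, rfl⟩
      · exact Or.inr (SimpleGraph.Reachable.refl _)
      · exact Or.inl (SimpleGraph.Reachable.refl _)
    · have hadj : (G.deleteEdges {s(u,v)}).Adj x' z := by
        simp [SimpleGraph.deleteEdges_adj, h, hedge]
      rcases hx with hx | hx
      · exact Or.inl (hx.trans hadj.reachable)
      · exact Or.inr (hx.trans hadj.reachable)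

lemma reach_closed {G : SimpleGraph M} {P : M → Prop}
    (h : ∀ x y, G.Adj x y → (P x ↔ P y)) {x y : M} (hr : G.Reachable x y) : P x ↔ P y := by
  obtain ⟨p⟩ := hr
  induction p with
  | nil => exact Iff.rfl
  | @cons x' z y' hadj q ih => exact (h x' z hadj).trans ih

lemma wchar (CA CB DA DB AA AB A1 A2 : Prop)
    (tA : CA ∨ DA) (tB : CB ∨ DB) (dA : ¬(CA ∧ DA)) (dB : ¬(CB ∧ DB))
    (cc : CA ↔ CB) (hAA : AA) (hAB : ¬AB) (hs : ¬(A1 ↔ A2)) :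
    ((CA ∧ (AA ↔ A1)) ∨ (DA ∧ (AA ↔ A2))) ↔ ¬((CB ∧ (AB ↔ A1)) ∨ (DB ∧ (AB ↔ A2))) := by
  tauto

lemma partner_iff {P Q R S : Prop} (tX : P ∨ Q) (tY : R ∨ S) (dX : ¬(P ∧ Q)) (dY : ¬(R ∧ S))
    (h : P ↔ R) : Q ↔ S := by tauto


/-- If `f = ab` is an exact edge of a tree `T`, `e = cd` is another edge whose removal
induces the partition `{M₁, M₂}`, and the distance between `M₁` and `M₂` is attained
at `m₁ ∈ M₁`, `m₂ ∈ M₂`, then `f` is an exact edge of `T[e → m₁m₂]` as well. -/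
theorem exact_edge_stable_under_exchange [MetricSpace M] (T : SimpleGraph M)
    (hT : T.IsTree) (a b : M) (hf : T.Adj a b) (hexact : ExactEdge T a b)
    (c d : M) (he : T.Adj c d) (hne : s(c,d) ≠ s(a,b)) (m₁ m₂ : M)
    (hm₁ : (T.deleteEdges {s(c,d)}).Reachable c m₁)
    (hm₂ : (T.deleteEdges {s(c,d)}).Reachable d m₂)
    (hatt : edist m₁ m₂ = setDist {x | (T.deleteEdges {s(c,d)}).Reachable c x}
                                  {x | (T.deleteEdges {s(c,d)}).Reachable d x}) :
    ExactEdge (SimpleGraph.fromEdgeSet ((T.edgeSet \ {s(c,d)}) ∪ {s(m₁,m₂)})) a b := by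
  classical
  have hconn := hT.isConnected
  have hacyc := hT.IsAcyclic
  -- notation
  set G' : SimpleGraph M := T.deleteEdges {s(a,b)} with hG'
  set H : SimpleGraph M := T.deleteEdges {s(c,d)} with hH
  set S' : SimpleGraph M :=
    (SimpleGraph.fromEdgeSet ((T.edgeSet \ {s(c,d)}) ∪ {s(m₁,m₂)})).deleteEdges {s(a,b)} with hS'
  -- bridge facts
  have hnab : ¬ G'.Reachable a b :=
    (SimpleGraph.isBridge_iff.mp ((SimpleGraph.isAcyclic_iff_forall_adj_isBridge.mp hacyc) hf))
  have hncd : ¬ H.Reachable c d :=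
    (SimpleGraph.isBridge_iff.mp ((SimpleGraph.isAcyclic_iff_forall_adj_isBridge.mp hacyc) he))
  have totAB : ∀ x, G'.Reachable a x ∨ G'.Reachable b x :=
    fun x => reach_del T a b (hconn.preconnected a x) (Or.inl (SimpleGraph.Reachable.refl _))
  have totCD : ∀ x, H.Reachable c x ∨ H.Reachable d x :=
    fun x => reach_del T c d (hconn.preconnected c x) (Or.inl (SimpleGraph.Reachable.refl _))
  have disjAB : ∀ x, ¬(G'.Reachable a x ∧ G'.Reachable b x) :=
    fun x ⟨h1, h2⟩ => hnab (h1.trans h2.symm)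
  have disjCD : ∀ x, ¬(H.Reachable c x ∧ H.Reachable d x) :=
    fun x ⟨h1, h2⟩ => hncd (h1.trans h2.symm)
  -- c,d on the same side of f ; a,b on the same side of e
  have hG'cd : G'.Adj c d := by
    rw [hG', SimpleGraph.deleteEdges_adj]; exact ⟨he, by simpa using hne⟩
  have hHab : H.Adj a b := by
    rw [hH, SimpleGraph.deleteEdges_adj]; exact ⟨hf, by simpa using (Ne.symm hne)⟩
  have hAcd : ∀ x, (G'.Reachable x c ↔ G'.Reachable x d) :=
    fun x => ⟨fun h => h.trans hG'cd.reachable, fun h => h.trans hG'cd.symm.reachable⟩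
  have hCab : ∀ x, (H.Reachable x a ↔ H.Reachable x b) :=
    fun x => ⟨fun h => h.trans hHab.reachable, fun h => h.trans hHab.symm.reachable⟩
  -- classify the edges of S'
  have edgeS' : ∀ x y, S'.Adj x y →
      (G'.Adj x y ∧ H.Adj x y) ∨ ((x = m₁ ∧ y = m₂) ∨ (x = m₂ ∧ y = m₁)) := by
    intro x y hxy
    rw [hS', SimpleGraph.deleteEdges_adj, SimpleGraph.fromEdgeSet_adj] at hxy
    obtain ⟨⟨hmem, hxyne⟩, hnf⟩ := hxy
    rcases hmem with ⟨hmem, hnee⟩ | hmm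
    · left
      have hTadj : T.Adj x y := T.mem_edgeSet.mp hmem
      constructor
      · rw [hG', SimpleGraph.deleteEdges_adj]; exact ⟨hTadj, by simpa using hnf⟩
      · rw [hH, SimpleGraph.deleteEdges_adj]; exact ⟨hTadj, by simpa using hnee⟩
    · right; exact Sym2.eq_iff.mp hmm
  -- unfolded exactness / attainment hypotheses
  have hexact' : edist a b =
      setDist {x | G'.Reachable a x} {x | G'.Reachable b x} := hexact
  have hatt' : edist m₁ m₂ =
      setDist {x | H.Reachable c x} {x | H.Reachable d x} := hatt
  -- membership in opposite components from a failed iff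
  have splitAB : ∀ {x y : M}, ¬(G'.Reachable a x ↔ G'.Reachable a y) →
      (G'.Reachable a x ∧ G'.Reachable b y) ∨ (G'.Reachable b x ∧ G'.Reachable a y) := by
    intro x y h
    rcases totAB x with hx | hx <;> rcases totAB y with hy | hy
    · exact absurd (iff_of_true hx hy) h
    · exact Or.inl ⟨hx, hy⟩
    · refine Or.inr ⟨hx, ?_⟩
      rcases totAB y with hy' | hy'
      · exact hy'
      · exact absurd (iff_of_false (fun h' => disjAB x ⟨h', hx⟩) (fun h' => disjAB y ⟨h', hy'⟩)) h
    · exact absurd (iff_of_false (fun h' => disjAB x ⟨h', hx⟩) (fun h' => disjAB y ⟨h', hy⟩)) h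
  have splitCD : ∀ {x y : M}, ¬(H.Reachable c x ↔ H.Reachable c y) →
      (H.Reachable c x ∧ H.Reachable d y) ∨ (H.Reachable d x ∧ H.Reachable c y) := by
    intro x y h
    rcases totCD x with hx | hx <;> rcases totCD y with hy | hy
    · exact absurd (iff_of_true hx hy) h
    · exact Or.inl ⟨hx, hy⟩
    · exact Or.inr ⟨hx, hy⟩
    · exact absurd (iff_of_false (fun h' => disjCD x ⟨h', hx⟩) (fun h' => disjCD y ⟨h', hy⟩)) h
  -- the key inequality
  have key : ∀ x y, S'.Reachable a x → S'.Reachable b y → edist a b ≤ edist x y := by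
    intro x y hax hby
    by_cases hside : (G'.Reachable a m₁ ↔ G'.Reachable a m₂)
    · -- Case I : m₁, m₂ on the same side of f
      have inv : ∀ u v, S'.Adj u v → (G'.Reachable a u ↔ G'.Reachable a v) := by
        intro u v huv
        rcases edgeS' u v huv with ⟨hG, _⟩ | ⟨⟨rfl, rfl⟩ | ⟨rfl, rfl⟩⟩
        · exact ⟨fun h => h.trans hG.reachable, fun h => h.trans hG.symm.reachable⟩
        · exact hside
        · exact hside.symm
      have hxa : G'.Reachable a x := (reach_closed inv hax).mp (SimpleGraph.Reachable.refl _)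
      have hyb : G'.Reachable b y := by
        rcases totAB y with hy | hy
        · exfalso
          have hb : G'.Reachable a b := (reach_closed inv hby).mpr hy
          exact hnab hb
        · exact hy
      rw [hexact']
      exact setDist_le hxa hyb
    · -- Case II : m₁, m₂ on opposite sides of f
      set W : M → Prop := fun z =>
        (H.Reachable c z ∧ (G'.Reachable a z ↔ G'.Reachable a m₁)) ∨
        (H.Reachable d z ∧ (G'.Reachable a z ↔ G'.Reachable a m₂)) with hW
      have invW : ∀ u v, S'.Adj u v → (W u ↔ W v) := by
        intro u v huv
        have hWm₁ : W m₁ := Or.inl ⟨hm₁, Iff.rfl⟩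
        have hWm₂ : W m₂ := Or.inr ⟨hm₂, Iff.rfl⟩
        rcases edgeS' u v huv with ⟨hG, hHe⟩ | ⟨⟨hu, hv⟩ | ⟨hu, hv⟩⟩
        · have h1 : G'.Reachable a u ↔ G'.Reachable a v :=
            ⟨fun h => h.trans hG.reachable, fun h => h.trans hG.symm.reachable⟩
          have h2 : H.Reachable c u ↔ H.Reachable c v :=
            ⟨fun h => h.trans hHe.reachable, fun h => h.trans hHe.symm.reachable⟩
          have h3 : H.Reachable d u ↔ H.Reachable d v :=
            ⟨fun h => h.trans hHe.reachable, fun h => h.trans hHe.symm.reachable⟩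
          simp only [hW]; rw [h1, h2, h3]
        · rw [hu, hv]; exact iff_of_true hWm₁ hWm₂
        · rw [hu, hv]; exact iff_of_true hWm₂ hWm₁
      -- a and b are in opposite W-classes
      have hWab : W a ↔ ¬ W b := by
        simp only [hW]
        exact wchar _ _ _ _ _ _ _ _ (totCD a) (totCD b) (disjCD a) (disjCD b) (hCab c)
          (SimpleGraph.Reachable.refl a) hnab hside
      have hWx : W a ↔ W x := reach_closed invW hax
      have hWy : W b ↔ W y := reach_closed invW hby
      have hquad : ¬(G'.Reachable a x ↔ G'.Reachable a y) ∨
          ¬(H.Reachable c x ↔ H.Reachable c y) := by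
        by_cases q1 : (G'.Reachable a x ↔ G'.Reachable a y)
        · by_cases q2 : (H.Reachable c x ↔ H.Reachable c y)
          · exfalso
            have q3 : H.Reachable d x ↔ H.Reachable d y :=
              partner_iff (totCD x) (totCD y) (disjCD x) (disjCD y) q2
            have hWxy : W x ↔ W y := by simp only [hW]; rw [q1, q2, q3]
            have hwab : W a ↔ W b := hWx.trans (hWxy.trans hWy.symm)
            by_cases hwa : W a
            · exact (hWab.mp hwa) (hwab.mp hwa)
            · exact hwa (hWab.mpr fun hb => hwa (hwab.mpr hb))
          · exact Or.inr q2
        · exact Or.inl q1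
      rcases hquad with hq | hq
      · rcases splitAB hq with ⟨h1, h2⟩ | ⟨h1, h2⟩
        · rw [hexact']; exact setDist_le h1 h2
        · rw [hexact', edist_comm x y]; exact setDist_le h2 h1
      · have step1 : edist a b ≤ edist m₁ m₂ := by
          rcases splitAB hside with ⟨h1, h2⟩ | ⟨h1, h2⟩
          · rw [hexact']; exact setDist_le h1 h2
          · rw [hexact', edist_comm m₁ m₂]; exact setDist_le h2 h1
        have step2 : edist m₁ m₂ ≤ edist x y := by
          rcases splitCD hq with ⟨h1, h2⟩ | ⟨h1, h2⟩
          · rw [hatt']; exact setDist_le h1 h2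
          · rw [hatt', edist_comm x y]; exact setDist_le h2 h1
        exact step1.trans step2
  -- conclude
  show edist a b = setDist {x | S'.Reachable a x} {x | S'.Reachable b x}
  refine le_antisymm ?_ ?_
  · exact le_setDist fun x hx y hy => key x y hx hy
  · exact setDist_le (SimpleGraph.Reachable.refl a) (SimpleGraph.Reachable.refl b)

end MSTPaper
end
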